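/- arXiv:1012.1956 — 3 statements merged into one kernel-verified Lean document; each statement's English description precedes it below -/
import Mathlib

section
/- Let (H,m,u,Δ,ε,ω,s,α,β) be a dual quasi-Hopf algebra over a field k. Then the convolution product S := β ∗ s ∗ α, i.e. the k-linear map S:H→H given by S(h)=β(h₁)s(h₂)α(h₃), is a preantipode for the underlying dual quasi-bialgebra H. -/
/-! Preliminaries: dual quasi-bialgebras, preantipodes and right dual
quasi-Hopf bicomodules, formulated via linear maps over a field `k`.
All Sweedler-notation identities are encoded as identities of (composites of)
linear maps on tensor products. -/

open TensorProduct

set_option maxHeartbeats 1000000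
set_option synthInstance.maxHeartbeats 400000

noncomputable section

universe u

section Defs

variable (k : Type u) [Field k] {H : Type u} [AddCommGroup H] [Module k H]

/-- Comultiplication on a two-fold tensor product induced by `c` on each factor:
`g ⊗ h ↦ (g₁ ⊗ h₁) ⊗ (g₂ ⊗ h₂)`. -/
def comul2 (c : H →ₗ[k] H ⊗[k] H) :
    (H ⊗[k] H) →ₗ[k] (H ⊗[k] H) ⊗[k] (H ⊗[k] H) :=
  (tensorTensorTensorComm k H H H H).toLinearMap ∘ₗ map c c

/-- Comultiplication on a three-fold tensor product. -/
def comul3 (c : H →ₗ[k] H ⊗[k] H) :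
    (H ⊗[k] (H ⊗[k] H)) →ₗ[k] (H ⊗[k] (H ⊗[k] H)) ⊗[k] (H ⊗[k] (H ⊗[k] H)) :=
  (tensorTensorTensorComm k H H (H ⊗[k] H) (H ⊗[k] H)).toLinearMap ∘ₗ map c (comul2 k c)

/-- Comultiplication on a four-fold tensor product. -/
def comul4 (c : H →ₗ[k] H ⊗[k] H) :
    (H ⊗[k] (H ⊗[k] (H ⊗[k] H))) →ₗ[k]
      (H ⊗[k] (H ⊗[k] (H ⊗[k] H))) ⊗[k] (H ⊗[k] (H ⊗[k] (H ⊗[k] H))) :=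
  (tensorTensorTensorComm k H H (H ⊗[k] (H ⊗[k] H)) (H ⊗[k] (H ⊗[k] H))).toLinearMap ∘ₗ
    map c (comul3 k c)

/-- Counit on a two-fold tensor product. -/
def counit2 (e : H →ₗ[k] k) : (H ⊗[k] H) →ₗ[k] k :=
  LinearMap.mul' k k ∘ₗ map e e

/-- Counit on a three-fold tensor product. -/
def counit3 (e : H →ₗ[k] k) : (H ⊗[k] (H ⊗[k] H)) →ₗ[k] k :=
  LinearMap.mul' k k ∘ₗ map e (counit2 k e)

/-- Counit on a four-fold tensor product. -/
def counit4 (e : H →ₗ[k] k) : (H ⊗[k] (H ⊗[k] (H ⊗[k] H))) →ₗ[k] k :=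
  LinearMap.mul' k k ∘ₗ map e (counit3 k e)

/-- Convolution product of two functionals with respect to a comultiplication `D`. -/
def conv (X : Type u) [AddCommGroup X] [Module k X] (D : X →ₗ[k] X ⊗[k] X)
    (φ ψ : X →ₗ[k] k) : X →ₗ[k] k :=
  LinearMap.mul' k k ∘ₗ map φ ψ ∘ₗ D

/-- Convolution `f ⋆ φ` of an `H`-valued map with a functional. -/
def convR (X : Type u) [AddCommGroup X] [Module k X] (D : X →ₗ[k] X ⊗[k] X)
    (f : X →ₗ[k] H) (φ : X →ₗ[k] k) : X →ₗ[k] H :=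
  (TensorProduct.rid k H).toLinearMap ∘ₗ map f φ ∘ₗ D

/-- Convolution `φ ⋆ f` of a functional with an `H`-valued map. -/
def convL (X : Type u) [AddCommGroup X] [Module k X] (D : X →ₗ[k] X ⊗[k] X)
    (φ : X →ₗ[k] k) (f : X →ₗ[k] H) : X →ₗ[k] H :=
  (TensorProduct.lid k H).toLinearMap ∘ₗ map φ f ∘ₗ D

end Defs

/-- A dual quasi-bialgebra `(H, m, u, Δ, ε, ω)` over a field `k`. -/
structure DualQuasiBialgebra (k : Type u) [Field k] (H : Type u)
    [AddCommGroup H] [Module k H] : Type u where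
  /-- the comultiplication `Δ` -/
  comul : H →ₗ[k] H ⊗[k] H
  /-- the counit `ε` -/
  counit : H →ₗ[k] k
  /-- the multiplication `m` -/
  mul : (H ⊗[k] H) →ₗ[k] H
  /-- the unit element `1_H` -/
  one : H
  /-- the reassociator `ω` -/
  omega : (H ⊗[k] (H ⊗[k] H)) →ₗ[k] k
  /-- the convolution inverse `ω⁻¹` of the reassociator -/
  omegaInv : (H ⊗[k] (H ⊗[k] H)) →ₗ[k] k
  /-- `Δ` is coassociative -/
  coassoc : (TensorProduct.assoc k H H H).toLinearMap ∘ₗ comul.rTensor H ∘ₗ comul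
      = comul.lTensor H ∘ₗ comul
  /-- `ε` is a left counit -/
  counit_comul : ∀ h : H, TensorProduct.lid k H ((counit.rTensor H) (comul h)) = h
  /-- `ε` is a right counit -/
  comul_counit : ∀ h : H, TensorProduct.rid k H ((counit.lTensor H) (comul h)) = h
  /-- `m` is a morphism of coalgebras: compatibility with `Δ` -/
  comul_mul : comul ∘ₗ mul = map mul mul ∘ₗ comul2 k comul
  /-- `m` is a morphism of coalgebras: compatibility with `ε` -/
  counit_mul : counit ∘ₗ mul = counit2 k counit
  /-- `u` is a morphism of coalgebras: `Δ(1_H) = 1_H ⊗ 1_H` -/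
  comul_one : comul one = one ⊗ₜ[k] one
  /-- `u` is a morphism of coalgebras: `ε(1_H) = 1` -/
  counit_one : counit one = 1
  /-- `m` is left unitary -/
  one_mul' : ∀ h : H, mul (one ⊗ₜ[k] h) = h
  /-- `m` is right unitary -/
  mul_one' : ∀ h : H, mul (h ⊗ₜ[k] one) = h
  /-- `ω⁻¹` is a right convolution inverse of `ω` -/
  omega_inv : conv k (H ⊗[k] (H ⊗[k] H)) (comul3 k comul) omega omegaInv = counit3 k counit
  /-- `ω⁻¹` is a left convolution inverse of `ω` -/
  inv_omega : conv k (H ⊗[k] (H ⊗[k] H)) (comul3 k comul) omegaInv omega = counit3 k counit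
  /-- the 3-cocycle condition:
  `ω(g₁⊗h₁⊗k₁l₁) ω(g₂h₂⊗k₂⊗l₂) = ε(g₁)ω(h₁⊗k₁⊗l₁) ⋆ ω(g⊗h₂k₂⊗l) ⋆ ω(g⊗h⊗k)ε(l)` -/
  omega_cocycle :
    conv k (H ⊗[k] (H ⊗[k] (H ⊗[k] H))) (comul4 k comul)
      (omega ∘ₗ LinearMap.lTensor H (LinearMap.lTensor H mul))
      (omega ∘ₗ mul.rTensor (H ⊗[k] H) ∘ₗ
        (TensorProduct.assoc k H H (H ⊗[k] H)).symm.toLinearMap)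
    = conv k (H ⊗[k] (H ⊗[k] (H ⊗[k] H))) (comul4 k comul)
        (LinearMap.mul' k k ∘ₗ map counit omega)
        (conv k (H ⊗[k] (H ⊗[k] (H ⊗[k] H))) (comul4 k comul)
          (omega ∘ₗ LinearMap.lTensor H
            (mul.rTensor H ∘ₗ (TensorProduct.assoc k H H H).symm.toLinearMap))
          (LinearMap.mul' k k ∘ₗ map omega counit ∘ₗ
            (TensorProduct.assoc k H (H ⊗[k] H) H).symm.toLinearMap ∘ₗ
            LinearMap.lTensor H (TensorProduct.assoc k H H H).symm.toLinearMap))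
  /-- unitality of `ω`: `ω(1_H ⊗ h ⊗ l) = ε(h)ε(l)` -/
  omega_one_left : ∀ x : H ⊗[k] H, omega (one ⊗ₜ[k] x) = counit2 k counit x
  /-- unitality of `ω`: `ω(g ⊗ 1_H ⊗ l) = ε(g)ε(l)` -/
  omega_one_mid : ∀ g h : H, omega (g ⊗ₜ[k] (one ⊗ₜ[k] h)) = counit g * counit h
  /-- unitality of `ω`: `ω(g ⊗ h ⊗ 1_H) = ε(g)ε(h)` -/
  omega_one_right : ∀ g h : H, omega (g ⊗ₜ[k] (h ⊗ₜ[k] one)) = counit g * counit h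
  /-- quasi-associativity: `g₁(h₁k₁) ω(g₂⊗h₂⊗k₂) = ω(g₁⊗h₁⊗k₁) (g₂h₂)k₂` -/
  quasi_assoc :
    convR k (H ⊗[k] (H ⊗[k] H)) (comul3 k comul) (mul ∘ₗ mul.lTensor H) omega
    = convL k (H ⊗[k] (H ⊗[k] H)) (comul3 k comul) omega
        (mul ∘ₗ mul.rTensor H ∘ₗ (TensorProduct.assoc k H H H).symm.toLinearMap)

section Preantipode

variable (k : Type u) [Field k] {H : Type u} [AddCommGroup H] [Module k H]

/-- `S : H → H` is a preantipode for the dual quasi-bialgebra `Q`: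
(P1) `S(h₂)₁ ⊗ h₁S(h₂)₂ = S(h) ⊗ 1_H`;
(P2) `S(h₁)₁h₂ ⊗ S(h₁)₂ = 1_H ⊗ S(h)`;
(P3) `ω(h₁ ⊗ S(h₂) ⊗ h₃) = ε(h)`. -/
def IsPreantipode (Q : DualQuasiBialgebra k H) (S : H →ₗ[k] H) : Prop :=
  (∀ h : H,
      (Q.mul.lTensor H ∘ₗ (TensorProduct.leftComm k H H H).toLinearMap ∘ₗ
        (Q.comul ∘ₗ S).lTensor H ∘ₗ Q.comul) h = S h ⊗ₜ[k] Q.one) ∧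
  (∀ h : H,
      (Q.mul.rTensor H ∘ₗ (TensorProduct.assoc k H H H).symm.toLinearMap ∘ₗ
        ((TensorProduct.comm k H H).toLinearMap.lTensor H) ∘ₗ
        (TensorProduct.assoc k H H H).toLinearMap ∘ₗ
        (Q.comul ∘ₗ S).rTensor H ∘ₗ Q.comul) h = Q.one ⊗ₜ[k] S h) ∧
  (∀ h : H,
      (Q.omega ∘ₗ (S.rTensor H).lTensor H ∘ₗ Q.comul.lTensor H ∘ₗ Q.comul) h = Q.counit h)

end Preantipode

/-- A right dual quasi-Hopf `H`-bicomodule over the dual quasi-bialgebra `Q`. -/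
structure Bicomodule (k : Type u) [Field k] (H : Type u) [AddCommGroup H] [Module k H]
    (Q : DualQuasiBialgebra k H) (M : Type u) [AddCommGroup M] [Module k M] : Type u where
  /-- the left `H`-coaction `ρˡ : m ↦ m₋₁ ⊗ m₀` -/
  coactL : M →ₗ[k] H ⊗[k] M
  /-- the right `H`-coaction `ρʳ : m ↦ m₀ ⊗ m₁` -/
  coactR : M →ₗ[k] M ⊗[k] H
  /-- the right `H`-action `m ⊗ h ↦ mh` -/
  act : (M ⊗[k] H) →ₗ[k] M
  /-- coassociativity of the left coaction -/
  coassocL : (TensorProduct.assoc k H H M).toLinearMap ∘ₗ Q.comul.rTensor M ∘ₗ coactL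
      = coactL.lTensor H ∘ₗ coactL
  /-- counitality of the left coaction -/
  counitL : ∀ m : M, TensorProduct.lid k M ((Q.counit.rTensor M) (coactL m)) = m
  /-- coassociativity of the right coaction -/
  coassocR : (TensorProduct.assoc k M H H).toLinearMap ∘ₗ coactR.rTensor H ∘ₗ coactR
      = Q.comul.lTensor M ∘ₗ coactR
  /-- counitality of the right coaction -/
  counitR : ∀ m : M, TensorProduct.rid k M ((Q.counit.lTensor M) (coactR m)) = m
  /-- the two coactions commute: `M` is an `H`-bicomodule -/
  bicom : coactR.lTensor H ∘ₗ coactL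
      = (TensorProduct.assoc k H M H).toLinearMap ∘ₗ coactL.rTensor H ∘ₗ coactR
  /-- unitality of the action: `m·1_H = m` -/
  act_one : ∀ m : M, act (m ⊗ₜ[k] Q.one) = m
  /-- left colinearity of the action: `(mh)₋₁ ⊗ (mh)₀ = m₋₁h₁ ⊗ m₀h₂` -/
  coactL_act : coactL ∘ₗ act
      = map Q.mul act ∘ₗ (tensorTensorTensorComm k H M H H).toLinearMap ∘ₗ map coactL Q.comul
  /-- right colinearity of the action: `(mh)₀ ⊗ (mh)₁ = m₀h₁ ⊗ m₁h₂` -/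
  coactR_act : coactR ∘ₗ act
      = map act Q.mul ∘ₗ (tensorTensorTensorComm k M H H H).toLinearMap ∘ₗ map coactR Q.comul
  /-- quasi-associativity of the action:
  `(mh)l = ω⁻¹(m₋₁⊗h₁⊗l₁) m₀(h₂l₂) ω(m₁⊗h₃⊗l₃)` -/
  act_act : act ∘ₗ act.rTensor H
      = (TensorProduct.rid k M).toLinearMap ∘ₗ
        map (act ∘ₗ Q.mul.lTensor M) Q.omega ∘ₗ
        ((tensorTensorTensorComm k M H (H ⊗[k] H) (H ⊗[k] H)).toLinearMap ∘ₗ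
          map coactR (comul2 k Q.comul)) ∘ₗ
        (TensorProduct.lid k (M ⊗[k] (H ⊗[k] H))).toLinearMap ∘ₗ
        map Q.omegaInv (LinearMap.id : M ⊗[k] (H ⊗[k] H) →ₗ[k] M ⊗[k] (H ⊗[k] H)) ∘ₗ
        ((tensorTensorTensorComm k H M (H ⊗[k] H) (H ⊗[k] H)).toLinearMap ∘ₗ
          map coactL (comul2 k Q.comul)) ∘ₗ
        (TensorProduct.assoc k M H H).toLinearMap

section Coinv

variable (k : Type u) [Field k] {H : Type u} [AddCommGroup H] [Module k H]
  {M : Type u} [AddCommGroup M] [Module k M]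

/-- The coinvariants `{x ∈ M ∣ ρʳ(x) = x ⊗ 1_H}` of a right coaction `r`. -/
def coinv (oneH : H) (r : M →ₗ[k] M ⊗[k] H) : Submodule k M :=
  LinearMap.ker (r - (TensorProduct.mk k M H).flip oneH)

variable {Q : DualQuasiBialgebra k H}

/-- The canonical map `ε_M : M^{coH} ⊗ H → M`, `m ⊗ h ↦ mh`. -/
def epsM (B : Bicomodule k H Q M) :
    ((coinv k Q.one B.coactR) ⊗[k] H) →ₗ[k] M :=
  B.act ∘ₗ map (coinv k Q.one B.coactR).subtype LinearMap.id

end Coinv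

section TauMaps

variable (k : Type u) [Field k] {H : Type u} [AddCommGroup H] [Module k H]
  {M : Type u} [AddCommGroup M] [Module k M] {Q : DualQuasiBialgebra k H}

/-- The swap `(b ⊗ c) ⊗ d ↦ (b ⊗ d) ⊗ c`. -/
def sigmaSwap : ((H ⊗[k] H) ⊗[k] H) →ₗ[k] ((H ⊗[k] H) ⊗[k] H) :=
  (TensorProduct.assoc k H H H).symm.toLinearMap ∘ₗ
    (TensorProduct.comm k H H).toLinearMap.lTensor H ∘ₗ
    (TensorProduct.assoc k H H H).toLinearMap

/-- The map `τ : M → M`, `τ(m) = ω(m₋₁ ⊗ S(m₁)₁ ⊗ m₂) · m₀ S(m₁)₂`,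
associated to a preantipode-candidate `S`. -/
def tauMap (B : Bicomodule k H Q M) (S : H →ₗ[k] H) : M →ₗ[k] M :=
  (TensorProduct.lid k M).toLinearMap ∘ₗ
    map Q.omega B.act ∘ₗ
    (TensorProduct.assoc k H (H ⊗[k] H) (M ⊗[k] H)).symm.toLinearMap ∘ₗ
    ((TensorProduct.leftComm k M (H ⊗[k] H) H).toLinearMap ∘ₗ
      (sigmaSwap k).lTensor M).lTensor H ∘ₗ
    (((Q.comul ∘ₗ S).rTensor H).lTensor M).lTensor H ∘ₗ
    (Q.comul.lTensor M).lTensor H ∘ₗ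
    B.coactR.lTensor H ∘ₗ
    B.coactL

/-- For a linear map `t : M → M`, the map
`m ⊗ h ↦ ω⁻¹(t(m₀)₋₁ ⊗ m₁ ⊗ h) · t(m₀)₀`. -/
def rhsTauAct (B : Bicomodule k H Q M) (t : M →ₗ[k] M) : (M ⊗[k] H) →ₗ[k] M :=
  (TensorProduct.lid k M).toLinearMap ∘ₗ
    map Q.omegaInv (LinearMap.id : M →ₗ[k] M) ∘ₗ
    (TensorProduct.assoc k H (H ⊗[k] H) M).symm.toLinearMap ∘ₗ
    (TensorProduct.comm k M (H ⊗[k] H)).toLinearMap.lTensor H ∘ₗ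
    (TensorProduct.assoc k H M (H ⊗[k] H)).toLinearMap ∘ₗ
    (TensorProduct.assoc k (H ⊗[k] M) H H).toLinearMap ∘ₗ
    ((B.coactL ∘ₗ t).rTensor H).rTensor H ∘ₗ
    B.coactR.rTensor H

/-- For a linear map `t : M → M`, the map `m ↦ t(m₀)₋₁ m₁ ⊗ t(m₀)₀`. -/
def rhsColinear (B : Bicomodule k H Q M) (t : M →ₗ[k] M) : M →ₗ[k] (H ⊗[k] M) :=
  Q.mul.rTensor M ∘ₗ
    (TensorProduct.assoc k H H M).symm.toLinearMap ∘ₗ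
    (TensorProduct.comm k M H).toLinearMap.lTensor H ∘ₗ
    (TensorProduct.assoc k H M H).toLinearMap ∘ₗ
    (B.coactL ∘ₗ t).rTensor H ∘ₗ
    B.coactR

end TauMaps

section Hat

variable (k : Type u) [Field k] {H : Type u} [AddCommGroup H] [Module k H]

/-- The right `H`-coaction on `H ⊗̂ H`: `h ⊗ l ↦ (h₁ ⊗ l₁) ⊗ h₂l₂`. -/
def hatCoactR (Q : DualQuasiBialgebra k H) : (H ⊗[k] H) →ₗ[k] (H ⊗[k] H) ⊗[k] H :=
  Q.mul.lTensor (H ⊗[k] H) ∘ₗ comul2 k Q.comul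

/-- The left `H`-coaction on `H ⊗̂ H`: `h ⊗ l ↦ l₁ ⊗ (h ⊗ l₂)`. -/
def hatCoactL (Q : DualQuasiBialgebra k H) : (H ⊗[k] H) →ₗ[k] H ⊗[k] (H ⊗[k] H) :=
  (TensorProduct.leftComm k H H H).toLinearMap ∘ₗ Q.comul.lTensor H

/-- The right `H`-action on `H ⊗̂ H`:
`(x ⊗ y) · h = (x₁ ⊗ y₁h₁) · ω(x₂ ⊗ y₂ ⊗ h₂)`. -/
def hatAct (Q : DualQuasiBialgebra k H) : ((H ⊗[k] H) ⊗[k] H) →ₗ[k] (H ⊗[k] H) :=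
  (TensorProduct.rid k (H ⊗[k] H)).toLinearMap ∘ₗ
    map (Q.mul.lTensor H ∘ₗ (TensorProduct.assoc k H H H).toLinearMap)
      (Q.omega ∘ₗ (TensorProduct.assoc k H H H).toLinearMap) ∘ₗ
    (tensorTensorTensorComm k (H ⊗[k] H) (H ⊗[k] H) H H).toLinearMap ∘ₗ
    map (comul2 k Q.comul) Q.comul

/-- The map `ε̂_H : (H ⊗̂ H)^{coH} ⊗ H → H ⊗ H`,
`(x ⊗ y) ⊗ h ↦ x₁ ⊗ y₁h₁ · ω(x₂ ⊗ y₂ ⊗ h₂)`. -/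
def epsHat (Q : DualQuasiBialgebra k H) :
    ((coinv k Q.one (hatCoactR k Q)) ⊗[k] H) →ₗ[k] H ⊗[k] H :=
  hatAct k Q ∘ₗ map (coinv k Q.one (hatCoactR k Q)).subtype LinearMap.id

end Hat

section GroupAlgebra

variable (k : Type u) [Field k] (G : Type u) [Group G]

/-- The group-like comultiplication on the group algebra `kG`: `g ↦ g ⊗ g`. -/
def comulG : MonoidAlgebra k G →ₗ[k] MonoidAlgebra k G ⊗[k] MonoidAlgebra k G :=
  Finsupp.lift (MonoidAlgebra k G ⊗[k] MonoidAlgebra k G) k G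
    (fun g => MonoidAlgebra.of k G g ⊗ₜ[k] MonoidAlgebra.of k G g) ∘ₗ
      (MonoidAlgebra.coeffLinearEquiv k).toLinearMap

/-- The counit on the group algebra `kG`: `g ↦ 1`. -/
def counitG : MonoidAlgebra k G →ₗ[k] k :=
  Finsupp.lift k k G (fun _ => (1 : k)) ∘ₗ
      (MonoidAlgebra.coeffLinearEquiv k).toLinearMap

/-- The linear extension of a map `θ : G × G × G → kˣ` to
`kG ⊗ kG ⊗ kG → k`. -/
def omegaTheta (θ : G → G → G → kˣ) :
    (MonoidAlgebra k G ⊗[k] (MonoidAlgebra k G ⊗[k] MonoidAlgebra k G)) →ₗ[k] k :=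
  TensorProduct.lift
    ((TensorProduct.lift.equiv (RingHom.id k) (MonoidAlgebra k G) (MonoidAlgebra k G) k).toLinearMap ∘ₗ
      Finsupp.lift (MonoidAlgebra k G →ₗ[k] MonoidAlgebra k G →ₗ[k] k) k G
        (fun g => Finsupp.lift (MonoidAlgebra k G →ₗ[k] k) k G
          (fun h => Finsupp.lift k k G (fun l => ((θ g h l : kˣ) : k)) ∘ₗ
            (MonoidAlgebra.coeffLinearEquiv k).toLinearMap) ∘ₗ
          (MonoidAlgebra.coeffLinearEquiv k).toLinearMap) ∘ₗ
        (MonoidAlgebra.coeffLinearEquiv k).toLinearMap)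

/-- The candidate preantipode on `kG`: `S(g) = θ(g,g⁻¹,g)⁻¹ · g⁻¹`. -/
def preantipodeG (θ : G → G → G → kˣ) : MonoidAlgebra k G →ₗ[k] MonoidAlgebra k G :=
  Finsupp.lift (MonoidAlgebra k G) k G
    (fun g => (((θ g g⁻¹ g)⁻¹ : kˣ) : k) • MonoidAlgebra.of k G g⁻¹) ∘ₗ
      (MonoidAlgebra.coeffLinearEquiv k).toLinearMap

end GroupAlgebra

section DualQuasiHopf

variable (k : Type u) [Field k] {H : Type u} [AddCommGroup H] [Module k H]

/-- The iterated comultiplication `h ↦ h₁ ⊗ (h₂ ⊗ (h₃ ⊗ (h₄ ⊗ h₅)))`. -/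
def comul5Fold (c : H →ₗ[k] H ⊗[k] H) :
    H →ₗ[k] H ⊗[k] (H ⊗[k] (H ⊗[k] (H ⊗[k] H))) :=
  ((c.lTensor H).lTensor H).lTensor H ∘ₗ (c.lTensor H).lTensor H ∘ₗ c.lTensor H ∘ₗ c

/-- The reassociation `x₁ ⊗ (x₂ ⊗ (x₃ ⊗ x₄)) ↦ (x₁ ⊗ (x₂ ⊗ x₃)) ⊗ x₄`. -/
def reshape4 : (H ⊗[k] (H ⊗[k] (H ⊗[k] H))) →ₗ[k] ((H ⊗[k] (H ⊗[k] H)) ⊗[k] H) :=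
  (TensorProduct.assoc k H (H ⊗[k] H) H).symm.toLinearMap ∘ₗ
    (TensorProduct.assoc k H H H).symm.toLinearMap.lTensor H

/-- `x ⊗ (y ⊗ z) ↦ β(x) · s(y) · α(z)`. -/
def midBSA (s : H →ₗ[k] H) (α β : H →ₗ[k] k) : (H ⊗[k] (H ⊗[k] H)) →ₗ[k] H :=
  (TensorProduct.lid k H).toLinearMap ∘ₗ
    map β ((TensorProduct.rid k H).toLinearMap ∘ₗ map s α)

/-- `x ⊗ (y ⊗ z) ↦ α(x) · y · β(z)`. -/
def midAB (α β : H →ₗ[k] k) : (H ⊗[k] (H ⊗[k] H)) →ₗ[k] H :=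
  (TensorProduct.lid k H).toLinearMap ∘ₗ
    map α ((TensorProduct.rid k H).toLinearMap ∘ₗ map (LinearMap.id : H →ₗ[k] H) β)

/-- The datum `(s, α, β)` makes the dual quasi-bialgebra `Q` a dual quasi-Hopf algebra:
`s` is a coalgebra anti-homomorphism, `h₁β(h₂)s(h₃) = β(h)1_H`, `s(h₁)α(h₂)h₃ = α(h)1_H`,
`ω(h₁ ⊗ β(h₂)s(h₃)α(h₄) ⊗ h₅) = ε(h) = ω⁻¹(s(h₁) ⊗ α(h₂)h₃β(h₄) ⊗ s(h₅))`. -/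
def IsDualQuasiHopf (Q : DualQuasiBialgebra k H)
    (s : H →ₗ[k] H) (α β : H →ₗ[k] k) : Prop :=
  (Q.counit ∘ₗ s = Q.counit) ∧
  (Q.comul ∘ₗ s = map s s ∘ₗ (TensorProduct.comm k H H).toLinearMap ∘ₗ Q.comul) ∧
  (∀ h : H,
    Q.mul ((((TensorProduct.lid k H).toLinearMap ∘ₗ map β s).lTensor H)
      ((Q.comul.lTensor H) (Q.comul h))) = β h • Q.one) ∧
  (∀ h : H,
    Q.mul ((map s ((TensorProduct.lid k H).toLinearMap ∘ₗ
        map α (LinearMap.id : H →ₗ[k] H)))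
      ((Q.comul.lTensor H) (Q.comul h))) = α h • Q.one) ∧
  (∀ h : H,
    Q.omega ((((midBSA k s α β).rTensor H ∘ₗ reshape4 k).lTensor H)
      ((comul5Fold k Q.comul) h)) = Q.counit h) ∧
  (∀ h : H,
    Q.omegaInv ((map s (map (midAB k α β) s ∘ₗ reshape4 k))
      ((comul5Fold k Q.comul) h)) = Q.counit h)

/-- The convolution product `S = β ∗ s ∗ α`, i.e. `S(h) = β(h₁)s(h₂)α(h₃)`. -/
def dqhPreantipode (Q : DualQuasiBialgebra k H)
    (s : H →ₗ[k] H) (α β : H →ₗ[k] k) : H →ₗ[k] H :=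
  midBSA k s α β ∘ₗ Q.comul.lTensor H ∘ₗ Q.comul

end DualQuasiHopf

namespace DQH2

section ExtNat
variable {k : Type u} [Field k] {A B C D X Y Z A' B' C' : Type u}
  [AddCommGroup A] [Module k A] [AddCommGroup B] [Module k B] [AddCommGroup C] [Module k C]
  [AddCommGroup D] [Module k D] [AddCommGroup X] [Module k X] [AddCommGroup Y] [Module k Y]
  [AddCommGroup Z] [Module k Z]
  [AddCommGroup A'] [Module k A'] [AddCommGroup B'] [Module k B'] [AddCommGroup C'] [Module k C']

theorem ext3R {f g : A ⊗[k] (B ⊗[k] C) →ₗ[k] D}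
    (hfg : ∀ a b c, f (a ⊗ₜ[k] (b ⊗ₜ[k] c)) = g (a ⊗ₜ[k] (b ⊗ₜ[k] c))) : f = g := by
  apply TensorProduct.ext'
  intro a y
  induction y using TensorProduct.induction_on with
  | zero => simp
  | tmul b c => exact hfg a b c
  | add u v hu hv => rw [tmul_add, map_add, map_add, hu, hv]

theorem ext_32 {f g : (A ⊗[k] (B ⊗[k] C)) ⊗[k] (X ⊗[k] Y) →ₗ[k] D}
    (hfg : ∀ a b c x y,
      f ((a ⊗ₜ[k] (b ⊗ₜ[k] c)) ⊗ₜ[k] (x ⊗ₜ[k] y)) = g ((a ⊗ₜ[k] (b ⊗ₜ[k] c)) ⊗ₜ[k] (x ⊗ₜ[k] y))) :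
    f = g := by
  apply TensorProduct.ext'
  intro p q
  induction p using TensorProduct.induction_on with
  | zero => simp
  | tmul a w =>
    induction w using TensorProduct.induction_on with
    | zero => simp
    | tmul b c =>
      induction q using TensorProduct.induction_on with
      | zero => simp
      | tmul x y => exact hfg a b c x y
      | add u v hu hv => rw [tmul_add, map_add, map_add, hu, hv]
    | add u v hu hv => rw [tmul_add, add_tmul, map_add, map_add, hu, hv]
  | add p₁ p₂ h₁ h₂ => rw [add_tmul, map_add, map_add, h₁, h₂]

theorem ext_23 {f g : (A ⊗[k] B) ⊗[k] (X ⊗[k] (Y ⊗[k] Z)) →ₗ[k] D}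
    (hfg : ∀ a b x y z,
      f ((a ⊗ₜ[k] b) ⊗ₜ[k] (x ⊗ₜ[k] (y ⊗ₜ[k] z)))
        = g ((a ⊗ₜ[k] b) ⊗ₜ[k] (x ⊗ₜ[k] (y ⊗ₜ[k] z)))) : f = g := by
  apply TensorProduct.ext'
  intro p q
  induction p using TensorProduct.induction_on with
  | zero => simp
  | tmul a b =>
    induction q using TensorProduct.induction_on with
    | zero => simp
    | tmul x w =>
      induction w using TensorProduct.induction_on with
      | zero => simp
      | tmul y z => exact hfg a b x y z
      | add u v hu hv => rw [tmul_add, tmul_add, map_add, map_add, hu, hv]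
    | add u v hu hv => rw [tmul_add, map_add, map_add, hu, hv]
  | add p₁ p₂ h₁ h₂ => rw [add_tmul, map_add, map_add, h₁, h₂]

theorem nat_assoc (f : A →ₗ[k] A') (g : B →ₗ[k] B') (h : C →ₗ[k] C') :
    (TensorProduct.assoc k A' B' C').toLinearMap ∘ₗ map (map f g) h
      = map f (map g h) ∘ₗ (TensorProduct.assoc k A B C).toLinearMap := by
  apply TensorProduct.ext_threefold
  intro a b c
  simp

theorem nat_assoc_symm (f : A →ₗ[k] A') (g : B →ₗ[k] B') (h : C →ₗ[k] C') :
    map (map f g) h ∘ₗ (TensorProduct.assoc k A B C).symm.toLinearMap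
      = (TensorProduct.assoc k A' B' C').symm.toLinearMap ∘ₗ map f (map g h) := by
  apply ext3R
  intro a b c
  simp


end ExtNat

section Main
variable {k : Type u} [Field k] {H : Type u} [AddCommGroup H] [Module k H]
variable (Q : DualQuasiBialgebra k H)

/-- `h ↦ h₁ ⊗ (h₂ ⊗ h₃)`. -/
def aD2 : H →ₗ[k] H ⊗[k] (H ⊗[k] H) := Q.comul.lTensor H ∘ₗ Q.comul
/-- `h ↦ h₁ ⊗ (h₂ ⊗ (h₃ ⊗ h₄))`. -/
def aD3 : H →ₗ[k] H ⊗[k] (H ⊗[k] (H ⊗[k] H)) := (aD2 Q).lTensor H ∘ₗ Q.comul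
/-- `h ↦ h₁ ⊗ (h₂ ⊗ (h₃ ⊗ (h₄ ⊗ h₅)))`. -/
def aD4 : H →ₗ[k] H ⊗[k] (H ⊗[k] (H ⊗[k] (H ⊗[k] H))) := (aD3 Q).lTensor H ∘ₗ Q.comul

/-- `(a ⊗ (b ⊗ c)) ⊗ (x ⊗ y) ↦ a ⊗ (b ⊗ (c ⊗ (x ⊗ y)))`. -/
def aTau (k : Type u) [Field k] {H : Type u} [AddCommGroup H] [Module k H] :
    ((H ⊗[k] (H ⊗[k] H)) ⊗[k] (H ⊗[k] H)) →ₗ[k] H ⊗[k] (H ⊗[k] (H ⊗[k] (H ⊗[k] H))) :=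
  ((TensorProduct.assoc k H H (H ⊗[k] H)).toLinearMap).lTensor H
    ∘ₗ (TensorProduct.assoc k H (H ⊗[k] H) (H ⊗[k] H)).toLinearMap

/-- `(a ⊗ b) ⊗ (x ⊗ (y ⊗ z)) ↦ a ⊗ (b ⊗ (x ⊗ (y ⊗ z)))`. -/
def aTau' (k : Type u) [Field k] {H : Type u} [AddCommGroup H] [Module k H] :
    ((H ⊗[k] H) ⊗[k] (H ⊗[k] (H ⊗[k] H))) →ₗ[k] H ⊗[k] (H ⊗[k] (H ⊗[k] (H ⊗[k] H))) :=
  (TensorProduct.assoc k H H (H ⊗[k] (H ⊗[k] H))).toLinearMap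

theorem aD4_eq : aD4 Q = comul5Fold k Q.comul := by
  simp only [aD4, aD3, aD2, comul5Fold, LinearMap.lTensor_comp, LinearMap.comp_assoc]

theorem co1 : Q.comul.rTensor H ∘ₗ Q.comul
    = (TensorProduct.assoc k H H H).symm.toLinearMap ∘ₗ aD2 Q := by
  rw [LinearEquiv.eq_toLinearMap_symm_comp]
  simpa only [aD2, LinearMap.comp_assoc] using Q.coassoc

theorem expE1 : (Q.comul.rTensor H).lTensor H ∘ₗ aD2 Q
    = ((TensorProduct.assoc k H H H).symm.toLinearMap).lTensor H ∘ₗ aD3 Q := by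
  have h1 : (Q.comul.rTensor H).lTensor H ∘ₗ aD2 Q
      = ((Q.comul.rTensor H ∘ₗ Q.comul)).lTensor H ∘ₗ Q.comul := by
    simp only [aD2, LinearMap.lTensor_comp, LinearMap.comp_assoc]
  rw [h1, co1 Q]
  simp only [aD3, aD2, LinearMap.lTensor_comp, LinearMap.comp_assoc]

theorem expE2 : (aD2 Q).rTensor H ∘ₗ Q.comul = reshape4 k ∘ₗ aD3 Q := by
  have natE2 : ((Q.comul.lTensor H).rTensor H) ∘ₗ (TensorProduct.assoc k H H H).symm.toLinearMap
      = (TensorProduct.assoc k H (H ⊗[k] H) H).symm.toLinearMap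
          ∘ₗ (Q.comul.rTensor H).lTensor H := by
    ext a b c; simp
  have h1 : (aD2 Q).rTensor H ∘ₗ Q.comul
      = (Q.comul.lTensor H).rTensor H ∘ₗ (Q.comul.rTensor H ∘ₗ Q.comul) := by
    simp only [aD2, LinearMap.rTensor_comp, LinearMap.comp_assoc]
  calc (aD2 Q).rTensor H ∘ₗ Q.comul
      = ((Q.comul.lTensor H).rTensor H ∘ₗ (TensorProduct.assoc k H H H).symm.toLinearMap)
          ∘ₗ aD2 Q := by rw [h1, co1 Q]; simp only [LinearMap.comp_assoc]
    _ = ((TensorProduct.assoc k H (H ⊗[k] H) H).symm.toLinearMap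
          ∘ₗ (Q.comul.rTensor H).lTensor H) ∘ₗ aD2 Q := by rw [natE2]
    _ = (TensorProduct.assoc k H (H ⊗[k] H) H).symm.toLinearMap
          ∘ₗ ((Q.comul.rTensor H).lTensor H ∘ₗ aD2 Q) := by
        simp only [LinearMap.comp_assoc]
    _ = reshape4 k ∘ₗ aD3 Q := by
        rw [expE1 Q, reshape4]; simp only [LinearMap.comp_assoc]

theorem subB : (TensorProduct.assoc k H H (H ⊗[k] H)).toLinearMap
      ∘ₗ map Q.comul Q.comul ∘ₗ Q.comul = aD3 Q := by
  have natB2 : (TensorProduct.assoc k H H (H ⊗[k] H)).toLinearMap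
        ∘ₗ Q.comul.lTensor (H ⊗[k] H) ∘ₗ (TensorProduct.assoc k H H H).symm.toLinearMap
      = (Q.comul.lTensor H).lTensor H := by
    ext a b c; simp
  have h1 : map Q.comul Q.comul ∘ₗ Q.comul
      = Q.comul.lTensor (H ⊗[k] H) ∘ₗ (Q.comul.rTensor H ∘ₗ Q.comul) := by
    rw [← LinearMap.comp_assoc, LinearMap.lTensor_comp_rTensor]
  have h2 : aD3 Q = (Q.comul.lTensor H).lTensor H ∘ₗ aD2 Q := by
    simp only [aD3, aD2, LinearMap.lTensor_comp, LinearMap.comp_assoc]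
  calc (TensorProduct.assoc k H H (H ⊗[k] H)).toLinearMap ∘ₗ map Q.comul Q.comul ∘ₗ Q.comul
      = ((TensorProduct.assoc k H H (H ⊗[k] H)).toLinearMap
          ∘ₗ Q.comul.lTensor (H ⊗[k] H) ∘ₗ (TensorProduct.assoc k H H H).symm.toLinearMap)
          ∘ₗ aD2 Q := by rw [h1, co1 Q]; simp only [LinearMap.comp_assoc]
    _ = aD3 Q := by rw [natB2, ← h2]

theorem lemB : aD4 Q = aTau k ∘ₗ map (aD2 Q) Q.comul ∘ₗ Q.comul := by
  symm
  have natB : aTau k ∘ₗ map (Q.comul.lTensor H) Q.comul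
        ∘ₗ (TensorProduct.assoc k H H H).symm.toLinearMap
      = ((TensorProduct.assoc k H H (H ⊗[k] H)).toLinearMap ∘ₗ map Q.comul Q.comul).lTensor H := by
    ext a b c; simp [aTau]
  have h1 : map (aD2 Q) Q.comul ∘ₗ Q.comul
      = map (Q.comul.lTensor H) Q.comul
          ∘ₗ (TensorProduct.assoc k H H H).symm.toLinearMap ∘ₗ aD2 Q := by
    have hsplit : map (aD2 Q) Q.comul
        = map (Q.comul.lTensor H) Q.comul ∘ₗ Q.comul.rTensor H := by
      rw [LinearMap.map_comp_rTensor]; rfl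
    rw [hsplit, LinearMap.comp_assoc, co1 Q]
  calc aTau k ∘ₗ map (aD2 Q) Q.comul ∘ₗ Q.comul
      = (aTau k ∘ₗ map (Q.comul.lTensor H) Q.comul
          ∘ₗ (TensorProduct.assoc k H H H).symm.toLinearMap) ∘ₗ aD2 Q := by
        rw [h1]; simp only [LinearMap.comp_assoc]
    _ = (((TensorProduct.assoc k H H (H ⊗[k] H)).toLinearMap
          ∘ₗ map Q.comul Q.comul).lTensor H) ∘ₗ aD2 Q := by rw [natB]
    _ = (((TensorProduct.assoc k H H (H ⊗[k] H)).toLinearMap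
          ∘ₗ map Q.comul Q.comul ∘ₗ Q.comul).lTensor H) ∘ₗ Q.comul := by
        simp only [aD2, LinearMap.lTensor_comp, LinearMap.comp_assoc]
    _ = aD4 Q := by rw [subB Q]; rfl

theorem lemB' : aD4 Q = aTau' k ∘ₗ map Q.comul (aD2 Q) ∘ₗ Q.comul := by
  symm
  have natB' : aTau' k ∘ₗ (aD2 Q).lTensor (H ⊗[k] H)
        ∘ₗ (TensorProduct.assoc k H H H).symm.toLinearMap
      = ((aD2 Q).lTensor H).lTensor H := by
    ext a b c; simp [aTau']
  have h1 : map Q.comul (aD2 Q) ∘ₗ Q.comul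
      = (aD2 Q).lTensor (H ⊗[k] H)
          ∘ₗ (TensorProduct.assoc k H H H).symm.toLinearMap ∘ₗ aD2 Q := by
    rw [← co1 Q, ← LinearMap.comp_assoc, LinearMap.lTensor_comp_rTensor]
  calc aTau' k ∘ₗ map Q.comul (aD2 Q) ∘ₗ Q.comul
      = (aTau' k ∘ₗ (aD2 Q).lTensor (H ⊗[k] H)
          ∘ₗ (TensorProduct.assoc k H H H).symm.toLinearMap) ∘ₗ aD2 Q := by
        rw [h1]; simp only [LinearMap.comp_assoc]
    _ = (((aD2 Q).lTensor H).lTensor H) ∘ₗ aD2 Q := by rw [natB']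
    _ = aD4 Q := by
        simp only [aD4, aD3, aD2, LinearMap.lTensor_comp, LinearMap.comp_assoc]

theorem lemE3 : (aD3 Q).rTensor H ∘ₗ Q.comul
    = (TensorProduct.assoc k H (H ⊗[k] (H ⊗[k] H)) H).symm.toLinearMap
        ∘ₗ (reshape4 k).lTensor H ∘ₗ aD4 Q := by
  have natE3 : ((aD2 Q).lTensor H).rTensor H ∘ₗ (TensorProduct.assoc k H H H).symm.toLinearMap
      = (TensorProduct.assoc k H (H ⊗[k] (H ⊗[k] H)) H).symm.toLinearMap
          ∘ₗ ((aD2 Q).rTensor H).lTensor H := by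
    ext a b c; simp
  have h1 : (aD3 Q).rTensor H ∘ₗ Q.comul
      = ((aD2 Q).lTensor H).rTensor H ∘ₗ (Q.comul.rTensor H ∘ₗ Q.comul) := by
    simp only [aD3, LinearMap.rTensor_comp, LinearMap.comp_assoc]
  calc (aD3 Q).rTensor H ∘ₗ Q.comul
      = (((aD2 Q).lTensor H).rTensor H ∘ₗ (TensorProduct.assoc k H H H).symm.toLinearMap)
          ∘ₗ aD2 Q := by rw [h1, co1 Q]; simp only [LinearMap.comp_assoc]
    _ = (TensorProduct.assoc k H (H ⊗[k] (H ⊗[k] H)) H).symm.toLinearMap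
          ∘ₗ (((aD2 Q).rTensor H).lTensor H ∘ₗ aD2 Q) := by
        rw [natE3]; simp only [LinearMap.comp_assoc]
    _ = (TensorProduct.assoc k H (H ⊗[k] (H ⊗[k] H)) H).symm.toLinearMap
          ∘ₗ (reshape4 k).lTensor H ∘ₗ aD4 Q := by
        congr 1
        have h2 : ((aD2 Q).rTensor H).lTensor H ∘ₗ aD2 Q
            = ((aD2 Q).rTensor H ∘ₗ Q.comul).lTensor H ∘ₗ Q.comul := by
          simp only [aD2, LinearMap.lTensor_comp, LinearMap.comp_assoc]
        rw [h2, expE2 Q]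
        simp only [aD4, LinearMap.lTensor_comp, LinearMap.comp_assoc]

end Main

section Hopf
variable {k : Type u} [Field k] {H : Type u} [AddCommGroup H] [Module k H]
variable (Q : DualQuasiBialgebra k H) (s : H →ₗ[k] H) (α β : H →ₗ[k] k)

/-- `x ⊗ y ↦ α(y) s(x)`. -/
def aPP : (H ⊗[k] H) →ₗ[k] H := (TensorProduct.rid k H).toLinearMap ∘ₗ map s α

/-- `x ⊗ ((u ⊗ v) ⊗ z) ↦ β(x)α(z) (s(v) ⊗ s(u))`. -/
def aNN : (H ⊗[k] ((H ⊗[k] H) ⊗[k] H)) →ₗ[k] (H ⊗[k] H) :=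
  (TensorProduct.lid k (H ⊗[k] H)).toLinearMap ∘ₗ
    map β ((TensorProduct.rid k (H ⊗[k] H)).toLinearMap ∘ₗ
      map (map s s ∘ₗ (TensorProduct.comm k H H).toLinearMap) α)

/-- reassociation `x ⊗ (y ⊗ (z ⊗ w)) ↦ x ⊗ ((y ⊗ z) ⊗ w)`. -/
def aSig (k : Type u) [Field k] {H : Type u} [AddCommGroup H] [Module k H] :
    (H ⊗[k] (H ⊗[k] (H ⊗[k] H))) →ₗ[k] (H ⊗[k] ((H ⊗[k] H) ⊗[k] H)) :=
  ((TensorProduct.assoc k H H H).symm.toLinearMap).lTensor H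

/-- `x ⊗ (y ⊗ z) ↦ β(y) x·s(z)`. -/
def aG3 : (H ⊗[k] (H ⊗[k] H)) →ₗ[k] H :=
  Q.mul ∘ₗ ((TensorProduct.lid k H).toLinearMap ∘ₗ map β s).lTensor H

/-- `x ⊗ (y ⊗ z) ↦ α(y) s(x)·z`. -/
def aG4 : (H ⊗[k] (H ⊗[k] H)) →ₗ[k] H :=
  Q.mul ∘ₗ map s ((TensorProduct.lid k H).toLinearMap ∘ₗ map α (LinearMap.id : H →ₗ[k] H))

/-- `(c ⊗ x) ⊗ y ↦ y ⊗ c•x`. -/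
def aKK (k : Type u) [Field k] {H : Type u} [AddCommGroup H] [Module k H] :
    ((k ⊗[k] H) ⊗[k] H) →ₗ[k] (H ⊗[k] H) :=
  (TensorProduct.comm k H H).toLinearMap ∘ₗ ((TensorProduct.lid k H).toLinearMap).rTensor H

theorem stepA
    (hs : Q.comul ∘ₗ s = map s s ∘ₗ (TensorProduct.comm k H H).toLinearMap ∘ₗ Q.comul) :
    Q.comul ∘ₗ midBSA k s α β = aNN s α β ∘ₗ (Q.comul.rTensor H).lTensor H := by
  ext a b c
  have hb := LinearMap.congr_fun hs b
  simp only [LinearMap.comp_apply, LinearEquiv.coe_coe, TensorProduct.comm_tmul,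
    TensorProduct.map_tmul] at hb
  simp [midBSA, aNN, hb, TensorProduct.smul_tmul', tmul_smul]

theorem lemLS
    (hs : Q.comul ∘ₗ s = map s s ∘ₗ (TensorProduct.comm k H H).toLinearMap ∘ₗ Q.comul) :
    Q.comul ∘ₗ dqhPreantipode k Q s α β = aNN s α β ∘ₗ aSig k ∘ₗ aD3 Q := by
  have h0 : dqhPreantipode k Q s α β = midBSA k s α β ∘ₗ aD2 Q := rfl
  calc Q.comul ∘ₗ dqhPreantipode k Q s α β
      = (Q.comul ∘ₗ midBSA k s α β) ∘ₗ aD2 Q := by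
        rw [h0]; simp only [LinearMap.comp_assoc]
    _ = aNN s α β ∘ₗ ((Q.comul.rTensor H).lTensor H ∘ₗ aD2 Q) := by
        rw [stepA Q s α β hs]; simp only [LinearMap.comp_assoc]
    _ = aNN s α β ∘ₗ aSig k ∘ₗ aD3 Q := by rw [expE1 Q]; rfl


theorem lemPL1 :
    Q.mul.lTensor H ∘ₗ (TensorProduct.leftComm k H H H).toLinearMap
        ∘ₗ (aNN s α β ∘ₗ aSig k).lTensor H ∘ₗ aTau k
      = (TensorProduct.comm k H H).toLinearMap ∘ₗ map (aG3 Q s β) (aPP s α) := by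
  ext a b c x y
  simp [aTau, aSig, aNN, aG3, aPP, TensorProduct.smul_tmul', tmul_smul, mul_comm]
  simp [← TensorProduct.smul_tmul', tmul_smul, map_smul, smul_smul, mul_comm]

theorem ax3map
    (h3 : ∀ h : H,
      Q.mul ((((TensorProduct.lid k H).toLinearMap ∘ₗ map β s).lTensor H)
        ((Q.comul.lTensor H) (Q.comul h))) = β h • Q.one) :
    aG3 Q s β ∘ₗ aD2 Q = β.smulRight Q.one := by
  apply LinearMap.ext
  intro h
  simpa [aG3, aD2] using h3 h

theorem fin1 : (TensorProduct.comm k H H).toLinearMap ∘ₗ map (β.smulRight Q.one) (aPP s α)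
    = (TensorProduct.mk k H H).flip Q.one ∘ₗ midBSA k s α β := by
  ext a b c
  simp [aPP, midBSA, TensorProduct.smul_tmul', tmul_smul]
  simp [← TensorProduct.smul_tmul', tmul_smul, smul_smul, mul_comm]

theorem lemP1
    (hs : Q.comul ∘ₗ s = map s s ∘ₗ (TensorProduct.comm k H H).toLinearMap ∘ₗ Q.comul)
    (h3 : ∀ h : H,
      Q.mul ((((TensorProduct.lid k H).toLinearMap ∘ₗ map β s).lTensor H)
        ((Q.comul.lTensor H) (Q.comul h))) = β h • Q.one) :
    Q.mul.lTensor H ∘ₗ (TensorProduct.leftComm k H H H).toLinearMap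
        ∘ₗ (Q.comul ∘ₗ dqhPreantipode k Q s α β).lTensor H ∘ₗ Q.comul
      = (TensorProduct.mk k H H).flip Q.one ∘ₗ dqhPreantipode k Q s α β := by
  have key : (Q.comul ∘ₗ dqhPreantipode k Q s α β).lTensor H ∘ₗ Q.comul
      = (aNN s α β ∘ₗ aSig k).lTensor H ∘ₗ aTau k ∘ₗ map (aD2 Q) Q.comul ∘ₗ Q.comul := by
    rw [lemLS Q s α β hs, ← lemB Q]
    simp only [aD4, LinearMap.lTensor_comp, LinearMap.comp_assoc]
  calc Q.mul.lTensor H ∘ₗ (TensorProduct.leftComm k H H H).toLinearMap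
        ∘ₗ (Q.comul ∘ₗ dqhPreantipode k Q s α β).lTensor H ∘ₗ Q.comul
      = (Q.mul.lTensor H ∘ₗ (TensorProduct.leftComm k H H H).toLinearMap
          ∘ₗ (aNN s α β ∘ₗ aSig k).lTensor H ∘ₗ aTau k)
          ∘ₗ map (aD2 Q) Q.comul ∘ₗ Q.comul := by
        rw [key]; simp only [LinearMap.comp_assoc]
    _ = (TensorProduct.comm k H H).toLinearMap
          ∘ₗ (map (aG3 Q s β) (aPP s α) ∘ₗ map (aD2 Q) Q.comul) ∘ₗ Q.comul := by
        rw [lemPL1]; simp only [LinearMap.comp_assoc]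
    _ = (TensorProduct.comm k H H).toLinearMap
          ∘ₗ map (β.smulRight Q.one) (aPP s α ∘ₗ Q.comul) ∘ₗ Q.comul := by
        rw [← TensorProduct.map_comp, ax3map Q s β h3]
    _ = ((TensorProduct.comm k H H).toLinearMap
          ∘ₗ map (β.smulRight Q.one) (aPP s α)) ∘ₗ aD2 Q := by
        rw [← LinearMap.map_comp_lTensor]
        simp only [aD2, LinearMap.comp_assoc]
    _ = (TensorProduct.mk k H H).flip Q.one ∘ₗ dqhPreantipode k Q s α β := by
        rw [fin1]
        simp only [dqhPreantipode, aD2, midBSA, aPP, LinearMap.comp_assoc]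


theorem lemPL2 :
    Q.mul.rTensor H ∘ₗ (TensorProduct.assoc k H H H).symm.toLinearMap
        ∘ₗ ((TensorProduct.comm k H H).toLinearMap.lTensor H)
        ∘ₗ (TensorProduct.assoc k H H H).toLinearMap
        ∘ₗ (aNN s α β ∘ₗ aSig k).rTensor H
        ∘ₗ (TensorProduct.assoc k H (H ⊗[k] (H ⊗[k] H)) H).symm.toLinearMap
        ∘ₗ (reshape4 k).lTensor H ∘ₗ aTau' k
      = aKK k ∘ₗ map (map β s) (aG4 Q s α) := by
  ext a b x y z
  simp [aTau', aSig, aNN, aKK, aG4, reshape4, TensorProduct.smul_tmul', tmul_smul]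
  simp [← TensorProduct.smul_tmul', tmul_smul, map_smul, smul_smul, mul_comm]

theorem ax4map
    (h4 : ∀ h : H,
      Q.mul ((map s ((TensorProduct.lid k H).toLinearMap ∘ₗ
          map α (LinearMap.id : H →ₗ[k] H)))
        ((Q.comul.lTensor H) (Q.comul h))) = α h • Q.one) :
    aG4 Q s α ∘ₗ aD2 Q = α.smulRight Q.one := by
  apply LinearMap.ext
  intro h
  simpa [aG4, aD2] using h4 h

theorem fin2 : aKK k ∘ₗ map (map β s) (α.smulRight Q.one)
      ∘ₗ (TensorProduct.assoc k H H H).symm.toLinearMap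
    = TensorProduct.mk k H H Q.one ∘ₗ midBSA k s α β := by
  ext a b c
  simp [aKK, midBSA, TensorProduct.smul_tmul', tmul_smul]

theorem lemP2
    (hs : Q.comul ∘ₗ s = map s s ∘ₗ (TensorProduct.comm k H H).toLinearMap ∘ₗ Q.comul)
    (h4 : ∀ h : H,
      Q.mul ((map s ((TensorProduct.lid k H).toLinearMap ∘ₗ
          map α (LinearMap.id : H →ₗ[k] H)))
        ((Q.comul.lTensor H) (Q.comul h))) = α h • Q.one) :
    Q.mul.rTensor H ∘ₗ (TensorProduct.assoc k H H H).symm.toLinearMap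
        ∘ₗ ((TensorProduct.comm k H H).toLinearMap.lTensor H)
        ∘ₗ (TensorProduct.assoc k H H H).toLinearMap
        ∘ₗ (Q.comul ∘ₗ dqhPreantipode k Q s α β).rTensor H ∘ₗ Q.comul
      = TensorProduct.mk k H H Q.one ∘ₗ dqhPreantipode k Q s α β := by
  have key : (Q.comul ∘ₗ dqhPreantipode k Q s α β).rTensor H ∘ₗ Q.comul
      = (aNN s α β ∘ₗ aSig k).rTensor H
          ∘ₗ (TensorProduct.assoc k H (H ⊗[k] (H ⊗[k] H)) H).symm.toLinearMap
          ∘ₗ (reshape4 k).lTensor H ∘ₗ aTau' k ∘ₗ map Q.comul (aD2 Q) ∘ₗ Q.comul := by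
    rw [lemLS Q s α β hs]
    have h1 : (aNN s α β ∘ₗ aSig k ∘ₗ aD3 Q).rTensor H ∘ₗ Q.comul
        = (aNN s α β ∘ₗ aSig k).rTensor H ∘ₗ ((aD3 Q).rTensor H ∘ₗ Q.comul) := by
      simp only [LinearMap.rTensor_comp, LinearMap.comp_assoc]
    rw [h1, lemE3 Q, ← lemB' Q]
  calc Q.mul.rTensor H ∘ₗ (TensorProduct.assoc k H H H).symm.toLinearMap
        ∘ₗ ((TensorProduct.comm k H H).toLinearMap.lTensor H)
        ∘ₗ (TensorProduct.assoc k H H H).toLinearMap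
        ∘ₗ (Q.comul ∘ₗ dqhPreantipode k Q s α β).rTensor H ∘ₗ Q.comul
      = (Q.mul.rTensor H ∘ₗ (TensorProduct.assoc k H H H).symm.toLinearMap
          ∘ₗ ((TensorProduct.comm k H H).toLinearMap.lTensor H)
          ∘ₗ (TensorProduct.assoc k H H H).toLinearMap
          ∘ₗ (aNN s α β ∘ₗ aSig k).rTensor H
          ∘ₗ (TensorProduct.assoc k H (H ⊗[k] (H ⊗[k] H)) H).symm.toLinearMap
          ∘ₗ (reshape4 k).lTensor H ∘ₗ aTau' k)
          ∘ₗ map Q.comul (aD2 Q) ∘ₗ Q.comul := by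
        rw [key]; simp only [LinearMap.comp_assoc]
    _ = aKK k ∘ₗ (map (map β s) (aG4 Q s α) ∘ₗ map Q.comul (aD2 Q)) ∘ₗ Q.comul := by
        rw [lemPL2]; simp only [LinearMap.comp_assoc]
    _ = aKK k ∘ₗ map (map β s ∘ₗ Q.comul) (α.smulRight Q.one) ∘ₗ Q.comul := by
        rw [← TensorProduct.map_comp, ax4map Q s α h4]
    _ = (aKK k ∘ₗ map (map β s) (α.smulRight Q.one)
          ∘ₗ (TensorProduct.assoc k H H H).symm.toLinearMap) ∘ₗ aD2 Q := by
        rw [← LinearMap.map_comp_rTensor, LinearMap.comp_assoc, co1 Q]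
        simp only [LinearMap.comp_assoc]
    _ = TensorProduct.mk k H H Q.one ∘ₗ dqhPreantipode k Q s α β := by
        rw [fin2]
        simp only [dqhPreantipode, aD2, midBSA, aPP, LinearMap.comp_assoc]

theorem lemP3
    (h5 : ∀ h : H,
      Q.omega ((((midBSA k s α β).rTensor H ∘ₗ reshape4 k).lTensor H)
        ((comul5Fold k Q.comul) h)) = Q.counit h) :
    Q.omega ∘ₗ ((dqhPreantipode k Q s α β).rTensor H).lTensor H
        ∘ₗ Q.comul.lTensor H ∘ₗ Q.comul = Q.counit := by
  have key : ((dqhPreantipode k Q s α β).rTensor H).lTensor H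
        ∘ₗ Q.comul.lTensor H ∘ₗ Q.comul
      = ((midBSA k s α β).rTensor H ∘ₗ reshape4 k).lTensor H ∘ₗ comul5Fold k Q.comul := by
    have h1 : (dqhPreantipode k Q s α β).rTensor H ∘ₗ Q.comul
        = (midBSA k s α β).rTensor H ∘ₗ ((aD2 Q).rTensor H ∘ₗ Q.comul) := by
      have h0 : dqhPreantipode k Q s α β = midBSA k s α β ∘ₗ aD2 Q := rfl
      rw [h0, LinearMap.rTensor_comp, LinearMap.comp_assoc]
    have h2 : ((dqhPreantipode k Q s α β).rTensor H).lTensor H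
          ∘ₗ Q.comul.lTensor H ∘ₗ Q.comul
        = ((dqhPreantipode k Q s α β).rTensor H ∘ₗ Q.comul).lTensor H ∘ₗ Q.comul := by
      simp only [LinearMap.lTensor_comp, LinearMap.comp_assoc]
    rw [h2, h1, expE2 Q, ← aD4_eq]
    simp only [aD4, LinearMap.lTensor_comp, LinearMap.comp_assoc]
  rw [key]
  apply LinearMap.ext
  intro h
  simpa using h5 h

end Hopf
end DQH2

/-- For a dual quasi-Hopf algebra `(H, m, u, Δ, ε, ω, s, α, β)`, the
convolution product `S = β ∗ s ∗ α`, i.e. `S(h) = β(h₁)s(h₂)α(h₃)`, is a preantipode. -/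
theorem dualQuasiHopf_preantipode
    (k : Type u) [Field k] (H : Type u) [AddCommGroup H] [Module k H]
    (Q : DualQuasiBialgebra k H) (s : H →ₗ[k] H) (α β : H →ₗ[k] k)
    (hQ : IsDualQuasiHopf k Q s α β) :
    IsPreantipode k Q (dqhPreantipode k Q s α β) := by
  obtain ⟨hc1, hc2, h3, h4, h5, h6⟩ := hQ
  refine ⟨fun h => ?_, fun h => ?_, fun h => ?_⟩
  · have := LinearMap.congr_fun (DQH2.lemP1 Q s α β hc2 h3) h
    simpa using this
  · have := LinearMap.congr_fun (DQH2.lemP2 Q s α β hc2 h4) h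
    simpa using this
  · exact LinearMap.congr_fun (DQH2.lemP3 Q s α β h5) h

end
end

section
/- Let H be a dual quasi-bialgebra over a field k, let M be a right dual quasi-Hopf H-bicomodule, and let τ:M→M^{coH} be a k-linear map satisfying τ(m₀)m₁ = m for all m∈M. Then τ satisfies τ(mh)=ε(h)m for all m∈M^{coH} and h∈H if and only if τ satisfies both τ(mh)=ω⁻¹(τ(m₀)₋₁⊗m₁⊗h)·τ(m₀)₀ for all m∈M, h∈H, and m₋₁⊗τ(m₀)=τ(m₀)₋₁m₁⊗τ(m₀)₀ for all m∈M. -/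
/-! Preliminaries: dual quasi-bialgebras, preantipodes and right dual
quasi-Hopf bicomodules, formulated via linear maps over a field `k`.
All Sweedler-notation identities are encoded as identities of (composites of)
linear maps on tensor products. -/

open TensorProduct

set_option maxHeartbeats 1000000
set_option synthInstance.maxHeartbeats 400000

noncomputable section

universe u

section Aux

variable {k : Type u} [Field k] {H : Type u} [AddCommGroup H] [Module k H]
  {M : Type u} [AddCommGroup M] [Module k M] {Q : DualQuasiBialgebra k H}

theorem rep_counit_r (g : H) (s : Finset (H × H))
    (hs : Q.comul g = ∑ p ∈ s, p.1 ⊗ₜ[k] p.2) :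
    ∑ p ∈ s, Q.counit p.2 • p.1 = g := by
  have h := Q.comul_counit g
  rw [hs] at h
  simpa [map_sum, TensorProduct.rid_tmul] using h

theorem rep_counit_l (g : H) (s : Finset (H × H))
    (hs : Q.comul g = ∑ p ∈ s, p.1 ⊗ₜ[k] p.2) :
    ∑ p ∈ s, Q.counit p.1 • p.2 = g := by
  have h := Q.counit_comul g
  rw [hs] at h
  simpa [map_sum, TensorProduct.lid_tmul] using h

/-- Applying `counit2` to the second leg of `comul2` is the identity. -/
theorem CU2M (y : H ⊗[k] H) :
    (TensorProduct.rid k (H ⊗[k] H))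
      (map (LinearMap.id : H ⊗[k] H →ₗ[k] H ⊗[k] H) (counit2 k Q.counit)
        (comul2 k Q.comul y)) = y := by
  induction y using TensorProduct.induction_on with
  | zero => simp
  | add u v hu hv => simp only [map_add, hu, hv]
  | tmul g h =>
      obtain ⟨sp, hsp⟩ := TensorProduct.exists_finset (Q.comul g)
      obtain ⟨sq, hsq⟩ := TensorProduct.exists_finset (Q.comul h)
      have hg := rep_counit_r (Q := Q) g sp hsp
      have hh := rep_counit_r (Q := Q) h sq hsq
      simp only [comul2, LinearMap.coe_comp, Function.comp_apply, map_tmul,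
        LinearEquiv.coe_coe, hsp, hsq, TensorProduct.sum_tmul, TensorProduct.tmul_sum,
        map_sum, tensorTensorTensorComm_tmul, counit2, LinearMap.mul'_apply,
        LinearMap.id_coe, id_eq, TensorProduct.rid_tmul]
      rw [← hg, ← hh, TensorProduct.sum_tmul, Finset.sum_comm]
      refine Finset.sum_congr rfl fun q _ => ?_
      rw [TensorProduct.tmul_sum]
      refine Finset.sum_congr rfl fun p _ => ?_
      rw [TensorProduct.smul_tmul_smul]

theorem pair_scal {X Y : Type u} [AddCommGroup X] [Module k X] [AddCommGroup Y] [Module k Y]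
    (ψ : X →ₗ[k] k) (φ : Y →ₗ[k] k) (v : X ⊗[k] Y) :
    LinearMap.mul' k k (map ψ φ v)
      = ψ ((TensorProduct.rid k X) (map (LinearMap.id : X →ₗ[k] X) φ v)) := by
  induction v using TensorProduct.induction_on with
  | zero => simp
  | add u v hu hv => simp only [map_add, hu, hv]
  | tmul x y => simp [mul_comm]

/-- Counitality of `comul2` against a functional. -/
theorem CU2 (ψ : H ⊗[k] H →ₗ[k] k) (y : H ⊗[k] H) :
    LinearMap.mul' k k (map ψ (counit2 k Q.counit) (comul2 k Q.comul y)) = ψ y := by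
  rw [pair_scal, CU2M]

end Aux
section Aux2

variable {k : Type u} [Field k] {H : Type u} [AddCommGroup H] [Module k H]
  {M : Type u} [AddCommGroup M] [Module k M] {Q : DualQuasiBialgebra k H}

theorem omegaInv_one_mid (g h : H) :
    Q.omegaInv (g ⊗ₜ[k] (Q.one ⊗ₜ[k] h)) = Q.counit g * Q.counit h := by
  have key := LinearMap.congr_fun Q.inv_omega (g ⊗ₜ[k] (Q.one ⊗ₜ[k] h))
  obtain ⟨sp, hsp⟩ := TensorProduct.exists_finset (Q.comul g)
  obtain ⟨sq, hsq⟩ := TensorProduct.exists_finset (Q.comul h)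
  have hg := rep_counit_r (Q := Q) g sp hsp
  have hh := rep_counit_r (Q := Q) h sq hsq
  simp only [conv, counit3, counit2, comul3, comul2, LinearMap.coe_comp,
    Function.comp_apply, map_tmul, LinearEquiv.coe_coe, Q.comul_one, Q.counit_one,
    hsp, hsq, TensorProduct.sum_tmul, TensorProduct.tmul_sum, map_sum,
    tensorTensorTensorComm_tmul, LinearMap.mul'_apply, one_mul,
    Q.omega_one_mid] at key
  rw [← key, ← hg, ← hh]
  simp only [TensorProduct.tmul_sum, TensorProduct.sum_tmul, map_sum,
    TensorProduct.smul_tmul', TensorProduct.tmul_smul, map_smul, smul_eq_mul]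
  refine Finset.sum_congr rfl fun p _ => ?_
  refine Finset.sum_congr rfl fun q _ => ?_
  simp only [← TensorProduct.smul_tmul', TensorProduct.tmul_smul, map_smul, smul_eq_mul]
  ring

theorem coinv_coactR {B : Bicomodule k H Q M} (c : ↥(coinv k Q.one B.coactR)) :
    B.coactR (c : M) = (c : M) ⊗ₜ[k] Q.one := by
  have hc := c.2
  simp only [coinv, LinearMap.mem_ker, LinearMap.sub_apply, sub_eq_zero] at hc
  simpa [TensorProduct.mk_apply, LinearMap.flip_apply] using hc

theorem coactL_coinv_mem {B : Bicomodule k H Q M} (c : ↥(coinv k Q.one B.coactR)) :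
    ∃ s : Finset (H × ↥(coinv k Q.one B.coactR)),
      B.coactL (c : M) = ∑ p ∈ s, p.1 ⊗ₜ[k] ((p.2 : M)) := by
  set f := B.coactR - (TensorProduct.mk k M H).flip Q.one with hf
  have hflip : ∀ y : H ⊗[k] M,
      (LinearMap.lTensor H ((TensorProduct.mk k M H).flip Q.one)) y
        = (TensorProduct.assoc k H M H) (y ⊗ₜ[k] Q.one) := by
    intro y
    induction y using TensorProduct.induction_on with
    | zero => simp
    | add u v hu hv => simp [TensorProduct.add_tmul, hu, hv]
    | tmul x m => simp
  have hker : (f.lTensor H) (B.coactL (c : M)) = 0 := by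
    have hb := LinearMap.congr_fun B.bicom (c : M)
    simp only [LinearMap.coe_comp, Function.comp_apply, LinearEquiv.coe_coe,
      coinv_coactR c, LinearMap.rTensor_tmul] at hb
    rw [hf, LinearMap.lTensor_sub, LinearMap.sub_apply, sub_eq_zero, hb, hflip]
  have hex := Module.Flat.lTensor_exact (R := k) H (LinearMap.exact_subtype_ker_map f)
  obtain ⟨z, hz⟩ := (hex (B.coactL (c : M))).mp hker
  obtain ⟨s, hzrep⟩ := TensorProduct.exists_finset z
  refine ⟨s, ?_⟩
  rw [← hz, hzrep, map_sum]
  rfl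

end Aux2
section Aux3

variable {k : Type u} [Field k] {H : Type u} [AddCommGroup H] [Module k H]
  {M : Type u} [AddCommGroup M] [Module k M] {Q : DualQuasiBialgebra k H}

theorem sum_rot {α β γ X : Type u} [AddCommMonoid X]
    (s1 : Finset α) (s2 : Finset β) (s3 : Finset γ) (f : α → β → γ → X) :
    (∑ a ∈ s1, ∑ b ∈ s2, ∑ c ∈ s3, f a b c)
      = ∑ c ∈ s3, ∑ a ∈ s1, ∑ b ∈ s2, f a b c := by
  calc (∑ a ∈ s1, ∑ b ∈ s2, ∑ c ∈ s3, f a b c)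
      = ∑ a ∈ s1, ∑ c ∈ s3, ∑ b ∈ s2, f a b c :=
        Finset.sum_congr rfl fun a _ => Finset.sum_comm
    _ = ∑ c ∈ s3, ∑ a ∈ s1, ∑ b ∈ s2, f a b c := Finset.sum_comm

/-- `Φ x c : h' ⊗ h ↦ ω⁻¹(x ⊗ h'₁ ⊗ h₁) • c(h'₂h₂)`. -/
def Phi (B : Bicomodule k H Q M) (x : H) (c : M) : (H ⊗[k] H) →ₗ[k] M :=
  (TensorProduct.lid k M).toLinearMap ∘ₗ
    map (Q.omegaInv ∘ₗ TensorProduct.mk k H (H ⊗[k] H) x)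
      (B.act ∘ₗ (TensorProduct.mk k M H c) ∘ₗ Q.mul) ∘ₗ comul2 k Q.comul

theorem G45aux (B : Bicomodule k H Q M) (m' : M)
    (hm' : B.coactR m' = m' ⊗ₜ[k] Q.one) (y : H ⊗[k] H) :
    (TensorProduct.rid k M)
      (map (B.act ∘ₗ Q.mul.lTensor M) Q.omega
        ((tensorTensorTensorComm k M H (H ⊗[k] H) (H ⊗[k] H))
          (map B.coactR (comul2 k Q.comul) (m' ⊗ₜ[k] y))))
      = B.act (m' ⊗ₜ[k] Q.mul y) := by
  have gen : ∀ v : (H ⊗[k] H) ⊗[k] (H ⊗[k] H),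
      (TensorProduct.rid k M)
        (map (B.act ∘ₗ Q.mul.lTensor M) Q.omega
          ((tensorTensorTensorComm k M H (H ⊗[k] H) (H ⊗[k] H))
            ((m' ⊗ₜ[k] Q.one) ⊗ₜ[k] v)))
        = B.act (m' ⊗ₜ[k] Q.mul ((TensorProduct.rid k (H ⊗[k] H))
            (map (LinearMap.id : H ⊗[k] H →ₗ[k] H ⊗[k] H) (counit2 k Q.counit) v))) := by
    intro v
    induction v using TensorProduct.induction_on with
    | zero => simp
    | add u v hu hv => simp only [TensorProduct.tmul_add, map_add, hu, hv]
    | tmul y₁ y₂ =>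
        simp [tensorTensorTensorComm_tmul, Q.omega_one_left, TensorProduct.rid_tmul,
          TensorProduct.tmul_smul, LinearMap.lTensor_tmul]
  have h1 : map B.coactR (comul2 k Q.comul) (m' ⊗ₜ[k] y)
      = (m' ⊗ₜ[k] Q.one) ⊗ₜ[k] (comul2 k Q.comul y) := by simp [hm']
  rw [h1, gen, CU2M]

theorem act_act_coinv (B : Bicomodule k H Q M) (n : M)
    (_hn : B.coactR n = n ⊗ₜ[k] Q.one)
    (s : Finset (H × ↥(coinv k Q.one B.coactR)))
    (hs : B.coactL n = ∑ p ∈ s, p.1 ⊗ₜ[k] ((p.2 : M)))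
    (h' h : H) :
    B.act (B.act (n ⊗ₜ[k] h') ⊗ₜ[k] h) = ∑ p ∈ s, Phi B p.1 (p.2 : M) (h' ⊗ₜ[k] h) := by
  obtain ⟨sp, hsp⟩ := TensorProduct.exists_finset (Q.comul h')
  obtain ⟨sq, hsq⟩ := TensorProduct.exists_finset (Q.comul h)
  have hc2 : comul2 k Q.comul (h' ⊗ₜ[k] h)
      = ∑ a ∈ sp, ∑ b ∈ sq, (a.1 ⊗ₜ[k] b.1) ⊗ₜ[k] (a.2 ⊗ₜ[k] b.2) := by
    simp only [comul2, LinearMap.coe_comp, Function.comp_apply, map_tmul,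
      LinearEquiv.coe_coe, hsp, hsq, TensorProduct.sum_tmul, TensorProduct.tmul_sum,
      map_sum, tensorTensorTensorComm_tmul]
    exact Finset.sum_comm
  have hG : ∀ (c : ↥(coinv k Q.one B.coactR)) (y : H ⊗[k] H),
      (TensorProduct.rid k M)
        (map (B.act ∘ₗ Q.mul.lTensor M) Q.omega
          ((tensorTensorTensorComm k M H (H ⊗[k] H) (H ⊗[k] H))
            (B.coactR (c : M) ⊗ₜ[k] comul2 k Q.comul y)))
        = B.act ((c : M) ⊗ₜ[k] Q.mul y) :=
    fun c y => G45aux B (c : M) (coinv_coactR c) y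
  have key := LinearMap.congr_fun B.act_act ((n ⊗ₜ[k] h') ⊗ₜ[k] h)
  simp only [LinearMap.coe_comp, Function.comp_apply, LinearEquiv.coe_coe,
    LinearMap.rTensor_tmul, TensorProduct.assoc_tmul, map_tmul, hs, hc2,
    TensorProduct.sum_tmul, TensorProduct.tmul_sum, map_sum,
    tensorTensorTensorComm_tmul, LinearMap.id_coe, id_eq,
    TensorProduct.lid_tmul, map_smul, hG] at key
  rw [key]
  have hPhi : ∀ p ∈ s, Phi B p.1 (p.2 : M) (h' ⊗ₜ[k] h)
      = ∑ a ∈ sp, ∑ b ∈ sq, Q.omegaInv (p.1 ⊗ₜ[k] (a.1 ⊗ₜ[k] b.1))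
          • B.act ((p.2 : M) ⊗ₜ[k] Q.mul (a.2 ⊗ₜ[k] b.2)) := by
    intro p _
    simp [Phi, hc2, map_sum, TensorProduct.mk_apply, TensorProduct.lid_tmul]
  rw [Finset.sum_congr rfl hPhi]
  exact sum_rot sp sq s fun a b p =>
    Q.omegaInv (p.1 ⊗ₜ[k] (a.1 ⊗ₜ[k] b.1)) • B.act ((p.2 : M) ⊗ₜ[k] Q.mul (a.2 ⊗ₜ[k] b.2))

end Aux3
section Aux4

variable {k : Type u} [Field k] {H : Type u} [AddCommGroup H] [Module k H]
  {M : Type u} [AddCommGroup M] [Module k M] {Q : DualQuasiBialgebra k H}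

theorem T_Phi (B : Bicomodule k H Q M) (t : M →ₗ[k] ↥(coinv k Q.one B.coactR))
    (hA : ∀ (c : ↥(coinv k Q.one B.coactR)) (h : H),
      ((coinv k Q.one B.coactR).subtype (t (B.act ((c : M) ⊗ₜ[k] h))))
        = Q.counit h • (c : M))
    (x : H) (c : ↥(coinv k Q.one B.coactR)) (y : H ⊗[k] H) :
    (coinv k Q.one B.coactR).subtype (t (Phi B x (c : M) y))
      = Q.omegaInv (x ⊗ₜ[k] y) • (c : M) := by
  obtain ⟨sw, hw⟩ := TensorProduct.exists_finset (comul2 k Q.comul y)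
  have hμ : ∀ v : H ⊗[k] H, Q.counit (Q.mul v) = counit2 k Q.counit v :=
    fun v => LinearMap.congr_fun Q.counit_mul v
  have hψ := CU2 (Q := Q) (Q.omegaInv ∘ₗ TensorProduct.mk k H (H ⊗[k] H) x) y
  rw [hw] at hψ
  simp only [map_sum, map_tmul, LinearMap.mul'_apply, LinearMap.coe_comp,
    Function.comp_apply, TensorProduct.mk_apply] at hψ
  simp only [Phi, LinearMap.coe_comp, Function.comp_apply, LinearEquiv.coe_coe, hw,
    map_sum, map_tmul, TensorProduct.mk_apply, TensorProduct.lid_tmul, map_smul,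
    hA, hμ, smul_smul]
  rw [← hψ, Finset.sum_smul]

end Aux4
/-- Let `τ : M → M^{coH}` be a linear map with `τ(m₀)m₁ = m` for all
`m ∈ M`. Then `τ(mh) = ε(h)m` for all coinvariant `m` and all `h` if and only if both
`τ(mh) = ω⁻¹(τ(m₀)₋₁ ⊗ m₁ ⊗ h) · τ(m₀)₀` and `m₋₁ ⊗ τ(m₀) = τ(m₀)₋₁m₁ ⊗ τ(m₀)₀` hold. -/
theorem tau_conditions_equivalent
    (k : Type u) [Field k] (H : Type u) [AddCommGroup H] [Module k H]
    (Q : DualQuasiBialgebra k H)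
    (M : Type u) [AddCommGroup M] [Module k M] (B : Bicomodule k H Q M)
    (t : M →ₗ[k] ↥(coinv k Q.one B.coactR))
    (hinv : ∀ m : M, epsM k B ((map t (LinearMap.id : H →ₗ[k] H)) (B.coactR m)) = m) :
    (∀ (m : ↥(coinv k Q.one B.coactR)) (h : H),
        t (B.act ((m : M) ⊗ₜ[k] h)) = Q.counit h • m)
    ↔ ((∀ (m : M) (h : H),
          ((coinv k Q.one B.coactR).subtype (t (B.act (m ⊗ₜ[k] h))))
            = rhsTauAct k B ((coinv k Q.one B.coactR).subtype ∘ₗ t) (m ⊗ₜ[k] h)) ∧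
        (∀ m : M,
          (((coinv k Q.one B.coactR).subtype ∘ₗ t).lTensor H) (B.coactL m)
            = rhsColinear k B ((coinv k Q.one B.coactR).subtype ∘ₗ t) m)) := by
  set T : M →ₗ[k] M := (coinv k Q.one B.coactR).subtype ∘ₗ t with hT
  have hTa : ∀ m : M, T m = (coinv k Q.one B.coactR).subtype (t m) := fun _ => rfl
  have hRT : ∀ m : M, B.coactR (T m) = T m ⊗ₜ[k] Q.one := fun m => coinv_coactR (t m)
  have hinv' : ∀ m : M, B.act (map T (LinearMap.id : H →ₗ[k] H) (B.coactR m)) = m := by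
    intro m
    have h0 := hinv m
    simp only [epsM, LinearMap.coe_comp, Function.comp_apply] at h0
    have harg : (map T (LinearMap.id : H →ₗ[k] H))
        = (map ((coinv k Q.one B.coactR).subtype) LinearMap.id) ∘ₗ
            (map t LinearMap.id) := by
      rw [← TensorProduct.map_comp, LinearMap.id_comp]
    rw [harg, LinearMap.comp_apply]
    exact h0
  have hfix : ∀ c : ↥(coinv k Q.one B.coactR), T ((c : M)) = (c : M) := by
    intro c
    have h1 := hinv' (c : M)
    rw [coinv_coactR c] at h1
    simpa [B.act_one] using h1
  constructor
  · -- forward direction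
    intro hA
    have hA' : ∀ (c : ↥(coinv k Q.one B.coactR)) (h : H),
        ((coinv k Q.one B.coactR).subtype (t (B.act ((c : M) ⊗ₜ[k] h))))
          = Q.counit h • (c : M) := by
      intro c h
      rw [hA c h]
      simp
    have hdec : ∀ m : M, ∃ s : Finset (H × ↥(coinv k Q.one B.coactR)),
        B.coactL (T m) = ∑ p ∈ s, p.1 ⊗ₜ[k] (p.2 : M) :=
      fun m => coactL_coinv_mem (t m)
    choose rep hrep using hdec
    constructor
    · -- the τ-action identity
      intro m h
      obtain ⟨sR, hsR⟩ := TensorProduct.exists_finset (B.coactR m)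
      have hm : m = ∑ i ∈ sR, B.act (T i.1 ⊗ₜ[k] i.2) := by
        conv_lhs => rw [← hinv' m, hsR]
        simp [map_sum]
      have hL : (coinv k Q.one B.coactR).subtype (t (B.act (m ⊗ₜ[k] h)))
          = ∑ i ∈ sR, ∑ p ∈ rep i.1,
              Q.omegaInv (p.1 ⊗ₜ[k] (i.2 ⊗ₜ[k] h)) • (p.2 : M) := by
        conv_lhs => rw [hm]
        rw [TensorProduct.sum_tmul, map_sum, map_sum, map_sum]
        refine Finset.sum_congr rfl fun i _ => ?_
        rw [act_act_coinv B (T i.1) (hRT i.1) (rep i.1) (hrep i.1) i.2 h, map_sum,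
          map_sum]
        refine Finset.sum_congr rfl fun p _ => ?_
        exact T_Phi B t hA' p.1 p.2 (i.2 ⊗ₜ[k] h)
      have hR : rhsTauAct k B T (m ⊗ₜ[k] h)
          = ∑ i ∈ sR, ∑ p ∈ rep i.1,
              Q.omegaInv (p.1 ⊗ₜ[k] (i.2 ⊗ₜ[k] h)) • (p.2 : M) := by
        simp only [rhsTauAct, LinearMap.coe_comp, Function.comp_apply,
          LinearEquiv.coe_coe, LinearMap.rTensor_tmul, hsR, TensorProduct.sum_tmul,
          map_sum, hrep, TensorProduct.assoc_tmul, LinearMap.lTensor_tmul,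
          TensorProduct.comm_tmul, TensorProduct.assoc_symm_tmul, map_tmul,
          TensorProduct.lid_tmul, LinearMap.id_coe, id_eq]
      rw [hL, hR]
    · -- the colinearity identity
      intro m
      obtain ⟨sR, hsR⟩ := TensorProduct.exists_finset (B.coactR m)
      have hm : m = ∑ i ∈ sR, B.act (T i.1 ⊗ₜ[k] i.2) := by
        conv_lhs => rw [← hinv' m, hsR]
        simp [map_sum]
      have hΔ : ∀ h : H, ∃ s : Finset (H × H), Q.comul h = ∑ p ∈ s, p.1 ⊗ₜ[k] p.2 :=
        fun h => TensorProduct.exists_finset _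
      choose repD hrepD using hΔ
      have hLHS : (T.lTensor H) (B.coactL m)
          = ∑ i ∈ sR, ∑ p ∈ rep i.1, Q.mul (p.1 ⊗ₜ[k] i.2) ⊗ₜ[k] (p.2 : M) := by
        conv_lhs => rw [hm]
        rw [map_sum, map_sum]
        refine Finset.sum_congr rfl fun i _ => ?_
        have hc := LinearMap.congr_fun B.coactL_act (T i.1 ⊗ₜ[k] i.2)
        simp only [LinearMap.coe_comp, Function.comp_apply, LinearEquiv.coe_coe,
          map_tmul, hrep, hrepD i.2, TensorProduct.sum_tmul, TensorProduct.tmul_sum,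
          map_sum, tensorTensorTensorComm_tmul] at hc
        rw [Finset.sum_comm] at hc
        rw [hc, map_sum]
        have hstep : ∀ p ∈ rep i.1,
            (T.lTensor H) (∑ w ∈ repD i.2,
                Q.mul (p.1 ⊗ₜ[k] w.1) ⊗ₜ[k] B.act ((p.2 : M) ⊗ₜ[k] w.2))
              = Q.mul (p.1 ⊗ₜ[k] i.2) ⊗ₜ[k] (p.2 : M) := by
          intro p _
          rw [map_sum]
          have : ∀ w ∈ repD i.2,
              (T.lTensor H) (Q.mul (p.1 ⊗ₜ[k] w.1) ⊗ₜ[k] B.act ((p.2 : M) ⊗ₜ[k] w.2))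
                = Q.counit w.2 • (Q.mul (p.1 ⊗ₜ[k] w.1) ⊗ₜ[k] (p.2 : M)) := by
            intro w _
            rw [LinearMap.lTensor_tmul]
            rw [show T (B.act ((p.2 : M) ⊗ₜ[k] w.2)) = Q.counit w.2 • (p.2 : M) from
              hA' p.2 w.2]
            rw [TensorProduct.tmul_smul]
          rw [Finset.sum_congr rfl this]
          have hcu := rep_counit_r (Q := Q) i.2 (repD i.2) (hrepD i.2)
          calc ∑ w ∈ repD i.2, Q.counit w.2 • (Q.mul (p.1 ⊗ₜ[k] w.1) ⊗ₜ[k] (p.2 : M))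
              = (∑ w ∈ repD i.2, Q.mul (p.1 ⊗ₜ[k] (Q.counit w.2 • w.1))) ⊗ₜ[k] (p.2 : M) := by
                rw [TensorProduct.sum_tmul]
                refine Finset.sum_congr rfl fun w _ => ?_
                rw [TensorProduct.tmul_smul, map_smul, TensorProduct.smul_tmul']
            _ = Q.mul (p.1 ⊗ₜ[k] i.2) ⊗ₜ[k] (p.2 : M) := by
                rw [← map_sum, ← TensorProduct.tmul_sum, hcu]
        exact Finset.sum_congr rfl hstep
      have hRHS : rhsColinear k B T m
          = ∑ i ∈ sR, ∑ p ∈ rep i.1, Q.mul (p.1 ⊗ₜ[k] i.2) ⊗ₜ[k] (p.2 : M) := by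
        simp only [rhsColinear, LinearMap.coe_comp, Function.comp_apply,
          LinearEquiv.coe_coe, hsR, map_sum, LinearMap.rTensor_tmul, hrep,
          TensorProduct.sum_tmul, TensorProduct.assoc_tmul, LinearMap.lTensor_tmul,
          TensorProduct.comm_tmul, TensorProduct.assoc_symm_tmul]
      rw [hLHS, hRHS]
  · -- backward direction
    rintro ⟨hB1, -⟩ c h
    apply Subtype.ext
    have hgoal := hB1 (c : M) h
    rw [show ((t (B.act ((c : M) ⊗ₜ[k] h)) : M))
        = (coinv k Q.one B.coactR).subtype (t (B.act ((c : M) ⊗ₜ[k] h))) from rfl,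
      hgoal]
    obtain ⟨s, hs⟩ := TensorProduct.exists_finset (B.coactL (c : M))
    have hcu : ∑ p ∈ s, Q.counit p.1 • p.2 = (c : M) := by
      have h2 := B.counitL (c : M)
      rw [hs] at h2
      simpa [map_sum, TensorProduct.lid_tmul] using h2
    have hLc : B.coactL (T (c : M)) = ∑ p ∈ s, p.1 ⊗ₜ[k] p.2 := by rw [hfix c, hs]
    simp only [rhsTauAct, LinearMap.coe_comp, Function.comp_apply, LinearEquiv.coe_coe,
      LinearMap.rTensor_tmul, coinv_coactR c, hLc, TensorProduct.sum_tmul, map_sum,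
      TensorProduct.assoc_tmul, LinearMap.lTensor_tmul, TensorProduct.comm_tmul,
      TensorProduct.assoc_symm_tmul, map_tmul, TensorProduct.lid_tmul,
      LinearMap.id_coe, id_eq, omegaInv_one_mid]
    rw [show ((Q.counit h • c : ↥(coinv k Q.one B.coactR)) : M) = Q.counit h • (c : M)
      from rfl]
    rw [← hcu, Finset.smul_sum]
    refine Finset.sum_congr rfl fun p _ => ?_
    rw [smul_smul, mul_comm]

end
end

section
/- Let H be a dual quasi-bialgebra over a field k and let M be a right dual quasi-Hopf H-bicomodule such that the map ε_M : M^{coH}⊗H → M, ε_M(m⊗h)=mh, is bijective. Define τ:M→M^{coH} by τ(m):=(id_{M^{coH}}⊗ε)(ε_M⁻¹(m)). Then for all m∈M and h∈H: (a) ε_M⁻¹(m)=τ(m₀)⊗m₁; (b) τ(mh)=ω⁻¹(τ(m₀)₋₁⊗m₁⊗h)·τ(m₀)₀; (c) m₋₁⊗τ(m₀)=τ(m₀)₋₁m₁⊗τ(m₀)₀; (d) τ(m₀)m₁=m. -/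
/-! Preliminaries: dual quasi-bialgebras, preantipodes and right dual
quasi-Hopf bicomodules, formulated via linear maps over a field `k`.
All Sweedler-notation identities are encoded as identities of (composites of)
linear maps on tensor products. -/

open TensorProduct

set_option maxHeartbeats 1000000
set_option synthInstance.maxHeartbeats 400000

noncomputable section

universe u

section TauOf

variable (k : Type u) [Field k] {H : Type u} [AddCommGroup H] [Module k H]
  {M : Type u} [AddCommGroup M] [Module k M] {Q : DualQuasiBialgebra k H}

/-- The map `τ = (id ⊗ ε) ∘ ε_M⁻¹ : M → M^{coH}` associated to a bijective `ε_M`. -/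
def tauOf (B : Bicomodule k H Q M) (hb : Function.Bijective (epsM k B)) :
    M →ₗ[k] ↥(coinv k Q.one B.coactR) :=
  (TensorProduct.rid k ↥(coinv k Q.one B.coactR)).toLinearMap ∘ₗ
    Q.counit.lTensor ↥(coinv k Q.one B.coactR) ∘ₗ
    (LinearEquiv.ofBijective (epsM k B) hb).symm.toLinearMap

end TauOf

section AuxTau

variable {k : Type u} [Field k] {H : Type u} [AddCommGroup H] [Module k H]
  {M : Type u} [AddCommGroup M] [Module k M] {Q : DualQuasiBialgebra k H}
  {B : Bicomodule k H Q M}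

private theorem aux_coactR_coinv (n : coinv k Q.one B.coactR) :
    B.coactR n.1 = n.1 ⊗ₜ[k] Q.one := by
  have h := n.2
  simp only [coinv, LinearMap.mem_ker, LinearMap.sub_apply] at h
  have h2 := sub_eq_zero.mp h
  simpa [TensorProduct.mk_apply, LinearMap.flip_apply] using h2

private theorem aux_flip_one (x : H ⊗[k] M) :
    (((TensorProduct.mk k M H).flip Q.one).lTensor H) x
      = (TensorProduct.assoc k H M H) (x ⊗ₜ[k] Q.one) := by
  induction x using TensorProduct.induction_on with
  | zero => simp
  | add u v hu hv => simp [add_tmul, map_add, hu, hv]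
  | tmul a m => simp [TensorProduct.mk_apply, LinearMap.flip_apply]

private theorem aux_lift (n : coinv k Q.one B.coactR) :
    ∃ w : H ⊗[k] ↥(coinv k Q.one B.coactR),
      ((coinv k Q.one B.coactR).subtype.lTensor H) w = B.coactL n.1 := by
  have hex : Function.Exact ((coinv k Q.one B.coactR).subtype.lTensor H)
      ((B.coactR - (TensorProduct.mk k M H).flip Q.one).lTensor H) :=
    Module.Flat.lTensor_exact H (LinearMap.exact_subtype_ker_map _)
  have hz : ((B.coactR - (TensorProduct.mk k M H).flip Q.one).lTensor H)
      (B.coactL n.1) = 0 := by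
    rw [LinearMap.lTensor_sub, LinearMap.sub_apply, sub_eq_zero]
    have hb := LinearMap.congr_fun B.bicom n.1
    simp only [LinearMap.comp_apply, LinearEquiv.coe_coe] at hb
    rw [hb, aux_coactR_coinv, aux_flip_one]
    simp [LinearMap.rTensor_tmul]
  obtain ⟨w, hw⟩ := (hex (B.coactL n.1)).mp hz
  exact ⟨w, hw⟩

variable (hb : Function.Bijective (epsM k B))

private theorem aux_epsM_symm_apply (x : ↥(coinv k Q.one B.coactR) ⊗[k] H) :
    (LinearEquiv.ofBijective (epsM k B) hb).symm (epsM k B x) = x := by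
  have h := (LinearEquiv.ofBijective (epsM k B) hb).symm_apply_apply x
  rwa [LinearEquiv.ofBijective_apply] at h

private theorem aux_epsM_apply_symm (m : M) :
    epsM k B ((LinearEquiv.ofBijective (epsM k B) hb).symm m) = m := by
  have h := (LinearEquiv.ofBijective (epsM k B) hb).apply_symm_apply m
  rwa [LinearEquiv.ofBijective_apply] at h

private theorem aux_epsM_tmul (n : ↥(coinv k Q.one B.coactR)) (h : H) :
    epsM k B (n ⊗ₜ[k] h) = B.act (n.1 ⊗ₜ[k] h) := by
  simp [epsM]

private theorem aux_tau_act (c : ↥(coinv k Q.one B.coactR)) (h : H) :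
    tauOf k B hb (B.act (c.1 ⊗ₜ[k] h)) = Q.counit h • c := by
  rw [← aux_epsM_tmul]
  simp only [tauOf, LinearMap.comp_apply, LinearEquiv.coe_coe]
  rw [aux_epsM_symm_apply]
  simp [TensorProduct.rid_tmul]

private theorem aux_a (m : M) :
    (LinearEquiv.ofBijective (epsM k B) hb).symm m
      = map (tauOf k B hb) (LinearMap.id : H →ₗ[k] H) (B.coactR m) := by
  have key : ∀ x : ↥(coinv k Q.one B.coactR) ⊗[k] H,
      map (tauOf k B hb) (LinearMap.id : H →ₗ[k] H) (B.coactR (epsM k B x)) = x := by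
    intro x
    induction x using TensorProduct.induction_on with
    | zero => simp
    | add u v hu hv => simp only [map_add, hu, hv]
    | tmul n h =>
      rw [aux_epsM_tmul]
      have hc := LinearMap.congr_fun B.coactR_act
        ((coinv k Q.one B.coactR).subtype n ⊗ₜ[k] h)
      simp only [LinearMap.comp_apply, LinearEquiv.coe_coe, map_tmul,
        Submodule.coe_subtype] at hc
      rw [hc, aux_coactR_coinv]
      have claim : ∀ z : H ⊗[k] H,
          map (tauOf k B hb) (LinearMap.id : H →ₗ[k] H)
            ((map B.act Q.mul)
              ((tensorTensorTensorComm k M H H H) ((n.1 ⊗ₜ[k] Q.one) ⊗ₜ[k] z)))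
          = n ⊗ₜ[k] (TensorProduct.lid k H) ((Q.counit.rTensor H) z) := by
        intro z
        induction z using TensorProduct.induction_on with
        | zero => simp
        | add u v hu hv => simp only [tmul_add, map_add, hu, hv]
        | tmul a b =>
          simp only [tensorTensorTensorComm_tmul, map_tmul, Q.one_mul',
            LinearMap.id_coe, id_eq, LinearMap.rTensor_tmul, TensorProduct.lid_tmul]
          rw [aux_tau_act hb n a]
          simp [smul_tmul]
      rw [claim (Q.comul h), Q.counit_comul h]
  have hm := aux_epsM_apply_symm hb m
  conv_rhs => rw [← hm]
  rw [key]

/-- `(a ⊗ c) ⊗ z ↦ ω⁻¹(a ⊗ z) • ι c`. -/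
private def PsiB (B : Bicomodule k H Q M) :
    ((H ⊗[k] ↥(coinv k Q.one B.coactR)) ⊗[k] (H ⊗[k] H)) →ₗ[k] M :=
  (TensorProduct.lid k M).toLinearMap ∘ₗ
    map Q.omegaInv (coinv k Q.one B.coactR).subtype ∘ₗ
    (TensorProduct.assoc k H (H ⊗[k] H) ↥(coinv k Q.one B.coactR)).symm.toLinearMap ∘ₗ
    (TensorProduct.comm k ↥(coinv k Q.one B.coactR) (H ⊗[k] H)).toLinearMap.lTensor H ∘ₗ
    (TensorProduct.assoc k H ↥(coinv k Q.one B.coactR) (H ⊗[k] H)).toLinearMap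

private theorem aux_PsiB_tmul (a : H) (c : ↥(coinv k Q.one B.coactR)) (z : H ⊗[k] H) :
    PsiB B ((a ⊗ₜ[k] c) ⊗ₜ[k] z) = Q.omegaInv (a ⊗ₜ[k] z) • c.1 := by
  simp [PsiB, TensorProduct.assoc_tmul, TensorProduct.comm_tmul, TensorProduct.lid_tmul]

private theorem aux_collapse2 (z : H ⊗[k] H) :
    (TensorProduct.rid k (H ⊗[k] H))
      (((counit2 k Q.counit).lTensor (H ⊗[k] H)) ((comul2 k Q.comul) z)) = z := by
  induction z using TensorProduct.induction_on with
  | zero => simp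
  | add u v hu hv => simp only [map_add, hu, hv]
  | tmul y h =>
    have hc : (comul2 k Q.comul) (y ⊗ₜ[k] h)
        = (tensorTensorTensorComm k H H H H) (Q.comul y ⊗ₜ[k] Q.comul h) := by
      simp [comul2]
    rw [hc]
    have hbil : ∀ (p q : H ⊗[k] H),
        (TensorProduct.rid k (H ⊗[k] H))
          (((counit2 k Q.counit).lTensor (H ⊗[k] H))
            ((tensorTensorTensorComm k H H H H) (p ⊗ₜ[k] q)))
        = (TensorProduct.rid k H) ((Q.counit.lTensor H) p) ⊗ₜ[k]
          (TensorProduct.rid k H) ((Q.counit.lTensor H) q) := by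
      intro p q
      induction p using TensorProduct.induction_on with
      | zero => simp
      | add u v hu hv => simp only [add_tmul, map_add, hu, hv]
      | tmul p1 p2 =>
        induction q using TensorProduct.induction_on with
        | zero => simp
        | add u v hu hv =>
          simp only [tmul_add, map_add, hu, hv]
        | tmul q1 q2 =>
          simp [counit2, TensorProduct.smul_tmul', smul_smul, mul_comm]
    rw [hbil, Q.comul_counit, Q.comul_counit]

private theorem aux_stepB1 (c : ↥(coinv k Q.one B.coactR)) (z : H ⊗[k] H) :
    (tauOf k B hb ((TensorProduct.rid k M)
      ((TensorProduct.map (B.act ∘ₗ LinearMap.lTensor M Q.mul) Q.omega)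
        ((TensorProduct.tensorTensorTensorComm k M H (H ⊗[k] H) (H ⊗[k] H))
          ((c.1 ⊗ₜ[k] Q.one) ⊗ₜ[k] (comul2 k Q.comul) z))))).1
    = counit2 k Q.counit z • c.1 := by
  have claim : ∀ Z : (H ⊗[k] H) ⊗[k] (H ⊗[k] H),
      (tauOf k B hb ((TensorProduct.rid k M)
        ((TensorProduct.map (B.act ∘ₗ LinearMap.lTensor M Q.mul) Q.omega)
          ((TensorProduct.tensorTensorTensorComm k M H (H ⊗[k] H) (H ⊗[k] H))
            ((c.1 ⊗ₜ[k] Q.one) ⊗ₜ[k] Z))))).1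
      = counit2 k Q.counit ((TensorProduct.rid k (H ⊗[k] H))
          (((counit2 k Q.counit).lTensor (H ⊗[k] H)) Z)) • c.1 := by
    intro Z
    induction Z using TensorProduct.induction_on with
    | zero => simp
    | add u v hu hv =>
      simp only [tmul_add, map_add, Submodule.coe_add, hu, hv, add_smul]
    | tmul z1 z2 =>
      simp only [tensorTensorTensorComm_tmul, map_tmul, LinearMap.comp_apply,
        LinearMap.lTensor_tmul, TensorProduct.rid_tmul, Q.omega_one_left,
        map_smul, Submodule.coe_subtype, SetLike.val_smul]
      rw [aux_tau_act hb c (Q.mul z1)]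
      have hcm := LinearMap.congr_fun Q.counit_mul z1
      simp only [LinearMap.comp_apply] at hcm
      simp [hcm, smul_smul, mul_comm]
  rw [claim, aux_collapse2]

private theorem aux_claim1 (w : H ⊗[k] ↥(coinv k Q.one B.coactR))
    (Z : (H ⊗[k] H) ⊗[k] (H ⊗[k] H)) :
    (coinv k Q.one B.coactR).subtype (tauOf k B hb ((TensorProduct.rid k M)
      ((TensorProduct.map (B.act ∘ₗ LinearMap.lTensor M Q.mul) Q.omega)
        ((TensorProduct.tensorTensorTensorComm k M H (H ⊗[k] H) (H ⊗[k] H))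
          ((TensorProduct.map B.coactR (comul2 k Q.comul))
            ((TensorProduct.lid k (M ⊗[k] (H ⊗[k] H)))
              ((TensorProduct.map Q.omegaInv LinearMap.id)
                ((TensorProduct.tensorTensorTensorComm k H M (H ⊗[k] H) (H ⊗[k] H))
                  ((((coinv k Q.one B.coactR).subtype.lTensor H) w) ⊗ₜ[k] Z)))))))))
    = PsiB B (w ⊗ₜ[k] ((TensorProduct.rid k (H ⊗[k] H))
        (((counit2 k Q.counit).lTensor (H ⊗[k] H)) Z))) := by
  induction w using TensorProduct.induction_on with
  | zero => simp
  | add u v hu hv => simp only [map_add, add_tmul, hu, hv]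
  | tmul a c =>
    induction Z using TensorProduct.induction_on with
    | zero => simp
    | add u v hu hv =>
      simp only [map_add, tmul_add, hu, hv]
    | tmul z1 z2 =>
      simp only [LinearMap.lTensor_tmul, Submodule.coe_subtype,
        tensorTensorTensorComm_tmul, map_tmul, LinearMap.id_coe, id_eq,
        TensorProduct.lid_tmul, map_smul, LinearMap.comp_apply,
        TensorProduct.rid_tmul, SetLike.val_smul, aux_PsiB_tmul, tmul_smul]
      rw [aux_coactR_coinv, aux_stepB1 hb c z2]
      rw [smul_comm]

private theorem aux_claim3 (w : H ⊗[k] ↥(coinv k Q.one B.coactR)) (y h : H) :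
    (TensorProduct.lid k M) ((TensorProduct.map Q.omegaInv LinearMap.id)
      ((TensorProduct.assoc k H (H ⊗[k] H) M).symm
        (((TensorProduct.comm k M (H ⊗[k] H)).toLinearMap.lTensor H)
          ((TensorProduct.assoc k H M (H ⊗[k] H))
            ((TensorProduct.assoc k (H ⊗[k] M) H H)
              (((((coinv k Q.one B.coactR).subtype.lTensor H) w) ⊗ₜ[k] y) ⊗ₜ[k] h))))))
    = PsiB B (w ⊗ₜ[k] (y ⊗ₜ[k] h)) := by
  induction w using TensorProduct.induction_on with
  | zero => simp
  | add u v hu hv => simp only [map_add, add_tmul, hu, hv]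
  | tmul a c =>
    simp [aux_PsiB_tmul, TensorProduct.assoc_tmul, TensorProduct.comm_tmul,
      TensorProduct.lid_tmul]

private theorem aux_coreB (n : ↥(coinv k Q.one B.coactR)) (y h : H) :
    (coinv k Q.one B.coactR).subtype (tauOf k B hb (B.act (B.act (n.1 ⊗ₜ[k] y) ⊗ₜ[k] h)))
    = (TensorProduct.lid k M) ((TensorProduct.map Q.omegaInv LinearMap.id)
      ((TensorProduct.assoc k H (H ⊗[k] H) M).symm
        (((TensorProduct.comm k M (H ⊗[k] H)).toLinearMap.lTensor H)
          ((TensorProduct.assoc k H M (H ⊗[k] H))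
            ((TensorProduct.assoc k (H ⊗[k] M) H H)
              (((B.coactL n.1) ⊗ₜ[k] y) ⊗ₜ[k] h)))))) := by
  obtain ⟨w, hw⟩ := aux_lift n
  have hact := LinearMap.congr_fun B.act_act ((n.1 ⊗ₜ[k] y) ⊗ₜ[k] h)
  simp only [LinearMap.comp_apply, LinearEquiv.coe_coe, LinearMap.rTensor_tmul,
    TensorProduct.assoc_tmul, map_tmul, LinearMap.id_coe, id_eq] at hact
  rw [hact, ← hw, aux_claim1 hb w, aux_collapse2, aux_claim3]

private theorem aux_claimC (w : H ⊗[k] ↥(coinv k Q.one B.coactR)) (q : H ⊗[k] H) :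
    (((coinv k Q.one B.coactR).subtype ∘ₗ tauOf k B hb).lTensor H)
      ((TensorProduct.map Q.mul B.act)
        ((tensorTensorTensorComm k H M H H)
          ((((coinv k Q.one B.coactR).subtype.lTensor H) w) ⊗ₜ[k] q)))
    = Q.mul.rTensor M ((TensorProduct.assoc k H H M).symm
        (((TensorProduct.comm k M H).toLinearMap.lTensor H)
          ((TensorProduct.assoc k H M H)
            ((((coinv k Q.one B.coactR).subtype.lTensor H) w) ⊗ₜ[k]
              ((TensorProduct.rid k H) ((Q.counit.lTensor H) q)))))) := by
  induction w using TensorProduct.induction_on with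
  | zero => simp
  | add u v hu hv => simp only [map_add, add_tmul, hu, hv]
  | tmul a c =>
    induction q using TensorProduct.induction_on with
    | zero => simp
    | add u v hu hv => simp only [map_add, tmul_add, hu, hv]
    | tmul q1 q2 =>
      simp only [LinearMap.lTensor_tmul, Submodule.coe_subtype,
        tensorTensorTensorComm_tmul, map_tmul, LinearMap.comp_apply,
        TensorProduct.rid_tmul, TensorProduct.assoc_tmul, TensorProduct.comm_tmul,
        TensorProduct.assoc_symm_tmul, LinearMap.rTensor_tmul]
      rw [aux_tau_act hb c q2]
      simp only [SetLike.val_smul, smul_tmul, tmul_smul, map_smul, LinearEquiv.coe_coe,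
        TensorProduct.comm_tmul, TensorProduct.assoc_symm_tmul, LinearMap.rTensor_tmul]

private theorem aux_coreC (n : ↥(coinv k Q.one B.coactR)) (y : H) :
    (((coinv k Q.one B.coactR).subtype ∘ₗ tauOf k B hb).lTensor H)
      (B.coactL (B.act (n.1 ⊗ₜ[k] y)))
    = Q.mul.rTensor M ((TensorProduct.assoc k H H M).symm
        (((TensorProduct.comm k M H).toLinearMap.lTensor H)
          ((TensorProduct.assoc k H M H) ((B.coactL n.1) ⊗ₜ[k] y)))) := by
  obtain ⟨w, hw⟩ := aux_lift n
  have hact := LinearMap.congr_fun B.coactL_act (n.1 ⊗ₜ[k] y)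
  simp only [LinearMap.comp_apply, LinearEquiv.coe_coe, map_tmul] at hact
  rw [hact, ← hw, aux_claimC hb w, Q.comul_counit]

end AuxTau

/-- Suppose `ε_M : M^{coH} ⊗ H → M` is bijective and let
`τ := (id ⊗ ε) ∘ ε_M⁻¹`. Then (a) `ε_M⁻¹(m) = τ(m₀) ⊗ m₁`;
(b) `τ(mh) = ω⁻¹(τ(m₀)₋₁ ⊗ m₁ ⊗ h) · τ(m₀)₀`;
(c) `m₋₁ ⊗ τ(m₀) = τ(m₀)₋₁m₁ ⊗ τ(m₀)₀`; (d) `τ(m₀)m₁ = m`. -/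
theorem tauOf_properties
    (k : Type u) [Field k] (H : Type u) [AddCommGroup H] [Module k H]
    (Q : DualQuasiBialgebra k H)
    (M : Type u) [AddCommGroup M] [Module k M] (B : Bicomodule k H Q M)
    (hb : Function.Bijective (epsM k B)) :
    (∀ m : M,
      (LinearEquiv.ofBijective (epsM k B) hb).symm m
        = (map (tauOf k B hb) (LinearMap.id : H →ₗ[k] H)) (B.coactR m)) ∧
    (∀ (m : M) (h : H),
      ((coinv k Q.one B.coactR).subtype (tauOf k B hb (B.act (m ⊗ₜ[k] h))))
        = rhsTauAct k B ((coinv k Q.one B.coactR).subtype ∘ₗ tauOf k B hb) (m ⊗ₜ[k] h)) ∧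
    (∀ m : M,
      (((coinv k Q.one B.coactR).subtype ∘ₗ tauOf k B hb).lTensor H) (B.coactL m)
        = rhsColinear k B ((coinv k Q.one B.coactR).subtype ∘ₗ tauOf k B hb) m) ∧
    (∀ m : M,
      epsM k B ((map (tauOf k B hb) (LinearMap.id : H →ₗ[k] H)) (B.coactR m)) = m) := by
  refine ⟨fun m => aux_a hb m, ?_, ?_, ?_⟩
  · intro m h
    simp only [rhsTauAct, LinearMap.comp_apply, LinearEquiv.coe_coe, LinearMap.rTensor_tmul]
    have hsplit :
        ((B.coactL ∘ₗ ((coinv k Q.one B.coactR).subtype ∘ₗ tauOf k B hb)).rTensor H)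
          (B.coactR m)
        = ((B.coactL ∘ₗ (coinv k Q.one B.coactR).subtype).rTensor H)
            ((LinearEquiv.ofBijective (epsM k B) hb).symm m) := by
      rw [show B.coactL ∘ₗ ((coinv k Q.one B.coactR).subtype ∘ₗ tauOf k B hb)
          = (B.coactL ∘ₗ (coinv k Q.one B.coactR).subtype) ∘ₗ tauOf k B hb from rfl,
        LinearMap.rTensor_comp, LinearMap.comp_apply, aux_a hb m]
      rfl
    rw [hsplit]
    have hm : B.act (m ⊗ₜ[k] h)
        = B.act (epsM k B ((LinearEquiv.ofBijective (epsM k B) hb).symm m) ⊗ₜ[k] h) := by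
      rw [aux_epsM_apply_symm]
    rw [hm]
    generalize (LinearEquiv.ofBijective (epsM k B) hb).symm m = x
    induction x using TensorProduct.induction_on with
    | zero => simp
    | add u v hu hv =>
      simp only [map_add, add_tmul, Submodule.coe_add, hu, hv]
    | tmul n y =>
      rw [aux_epsM_tmul]
      simp only [LinearMap.rTensor_tmul, LinearMap.comp_apply, Submodule.coe_subtype]
      exact aux_coreB hb n y h
  · intro m
    simp only [rhsColinear, LinearMap.comp_apply, LinearEquiv.coe_coe]
    have hsplit :
        ((B.coactL ∘ₗ ((coinv k Q.one B.coactR).subtype ∘ₗ tauOf k B hb)).rTensor H)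
          (B.coactR m)
        = ((B.coactL ∘ₗ (coinv k Q.one B.coactR).subtype).rTensor H)
            ((LinearEquiv.ofBijective (epsM k B) hb).symm m) := by
      rw [show B.coactL ∘ₗ ((coinv k Q.one B.coactR).subtype ∘ₗ tauOf k B hb)
          = (B.coactL ∘ₗ (coinv k Q.one B.coactR).subtype) ∘ₗ tauOf k B hb from rfl,
        LinearMap.rTensor_comp, LinearMap.comp_apply, aux_a hb m]
      rfl
    rw [hsplit]
    have hm : B.coactL m
        = B.coactL (epsM k B ((LinearEquiv.ofBijective (epsM k B) hb).symm m)) := by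
      rw [aux_epsM_apply_symm]
    rw [hm]
    generalize (LinearEquiv.ofBijective (epsM k B) hb).symm m = x
    induction x using TensorProduct.induction_on with
    | zero => simp
    | add u v hu hv =>
      simp only [map_add, add_tmul, hu, hv]
    | tmul n y =>
      rw [aux_epsM_tmul]
      simp only [LinearMap.rTensor_tmul, LinearMap.comp_apply, Submodule.coe_subtype]
      exact aux_coreC hb n y
  · intro m
    rw [← aux_a hb m, aux_epsM_apply_symm]

end
end
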